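/- arXiv:2410.20240 — 6 statements merged into one kernel-verified Lean document; each statement's English description precedes it below -/
import Mathlib

section
/- In the MPMRF construction, every component has a Poisson distribution with mean λ: if T=(V,E) is a tree on d vertices rooted at r, λ>0, α=(α_e)_{e∈E}∈(0,1)^{d−1}, and N=(N_v)_{v∈V}∼MPMRF(λ,α,T), then for every v∈V the random variable N_v has the Poisson distribution with parameter λ. -/
open MeasureTheory ProbabilityTheory
open scoped ENNReal Classical

noncomputable section

/-- `X` has the Poisson distribution with (real) parameter `r`. -/
def IsPoissonRV {Ω : Type*} [MeasureSpace Ω] (X : Ω → ℕ) (r : ℝ) : Prop :=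
  Measurable X ∧ ∀ k : ℕ,
    (ℙ : Measure Ω) {ω | X ω = k} = ENNReal.ofReal (Real.exp (-r) * r ^ k / (Nat.factorial k))

/-- `X` is a Bernoulli random variable with success probability `p`. -/
def IsBernoulliRV {Ω : Type*} [MeasureSpace Ω] (X : Ω → Bool) (p : ℝ) : Prop :=
  Measurable X ∧ (ℙ : Measure Ω) {ω | X ω = true} = ENNReal.ofReal p

/-- `pa` is the parent map of the tree `G` rooted at `r`. -/
def IsParentMap {V : Type*} (G : SimpleGraph V) (r : V) (pa : V → V) : Prop :=
  pa r = r ∧ (∀ v, v ≠ r → G.Adj (pa v) v) ∧ ∀ v, ∃ n : ℕ, pa^[n] v = r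

/-- `N` is an MPMRF vector built (via binomial thinning of the parent value plus an
independent Poisson innovation) along the tree with parent map `pa` rooted at `r`. -/
def IsMPMRF {V Ω : Type*} [Fintype V] [DecidableEq V] [MeasureSpace Ω]
    (lam : ℝ) (α : V → V → ℝ) (pa : V → V) (r : V) (N : V → Ω → ℕ) : Prop :=
  ∃ (L : V → Ω → ℕ) (I : V → ℕ → Ω → Bool),
    iIndepFun
      (Sum.elim L (fun (p : V × ℕ) (ω : Ω) => (if I p.1 p.2 ω then 1 else 0 : ℕ))) ℙ ∧
    IsPoissonRV (L r) lam ∧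
    (∀ v, v ≠ r → IsPoissonRV (L v) (lam * (1 - α (pa v) v))) ∧
    (∀ v i, IsBernoulliRV (I v i) (α (pa v) v)) ∧
    (∀ ω, N r ω = L r ω) ∧
    ∀ v, v ≠ r → ∀ ω, N v ω = L v ω + ∑ i ∈ Finset.range (N (pa v) ω), (if I v i ω then 1 else 0)

/-- supermodular function on ℝ². -/
def Supermodular (ζ : ℝ × ℝ → ℝ) : Prop :=
  ∀ x y : ℝ × ℝ, ζ x + ζ y ≤ ζ (x ⊓ y) + ζ (x ⊔ y)

/-- supermodular order for bivariate random vectors. -/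
def SupermodularLE {Ω Ω' : Type*} [MeasureSpace Ω] [MeasureSpace Ω']
    (X : Ω → ℝ × ℝ) (Y : Ω' → ℝ × ℝ) : Prop :=
  ∀ ζ : ℝ × ℝ → ℝ, Supermodular ζ →
    Integrable (fun ω => ζ (X ω)) ℙ → Integrable (fun ω => ζ (Y ω)) ℙ →
    ∫ ω, ζ (X ω) ∂ℙ ≤ ∫ ω, ζ (Y ω) ∂ℙ

/-- usual stochastic order for ℕ-valued random variables. -/
def StochLE {Ω Ω' : Type*} [MeasureSpace Ω] [MeasureSpace Ω']
    (X : Ω → ℕ) (Y : Ω' → ℕ) : Prop :=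
  ∀ k : ℕ, (ℙ : Measure Ω) {ω | k < X ω} ≤ (ℙ : Measure Ω') {ω | k < Y ω}

/-- convex order for real random variables. -/
def ConvexLE {Ω Ω' : Type*} [MeasureSpace Ω] [MeasureSpace Ω']
    (X : Ω → ℝ) (Y : Ω' → ℝ) : Prop :=
  ∀ φ : ℝ → ℝ, ConvexOn ℝ Set.univ φ →
    Integrable (fun ω => φ (X ω)) ℙ → Integrable (fun ω => φ (Y ω)) ℙ →
    ∫ ω, φ (X ω) ∂ℙ ≤ ∫ ω, φ (Y ω) ∂ℙ

/-- the recursive family of pgf's `η_v^{T_r}` associated with the rooted tree with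
parent map `pa` and edge parameters `α`. -/
def IsEta {V : Type*} [Fintype V] (α : V → V → ℝ) (pa : V → V) (η : V → ℝ → ℝ) : Prop :=
  ∀ v t, η v t = t * ∏ j ∈ Finset.univ.filter (fun j => pa j = v ∧ j ≠ v),
    (1 - α v j + α v j * η j t)

/-- `g` is the probability generating function of `X` (on `[-1,1]`). -/
def HasPGF {Ω : Type*} [MeasureSpace Ω] (X : Ω → ℕ) (g : ℝ → ℝ) : Prop :=
  ∀ t ∈ Set.Icc (-1 : ℝ) 1, ∫ ω, t ^ X ω ∂ℙ = g t


section MyAux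

lemma tsum_ofReal_exp {x : ℝ} (hx : 0 ≤ x) :
    ∑' n : ℕ, ENNReal.ofReal (x ^ n / n.factorial) = ENNReal.ofReal (Real.exp x) := by
  rw [← ENNReal.ofReal_tsum_of_nonneg (fun n => by positivity) (Real.summable_pow_div_factorial x)]
  congr 1
  rw [Real.exp_eq_exp_ℝ, NormedSpace.exp_eq_tsum_div]

-- inner sum: thinning identity
lemma my_inner_sum (lam p q : ℝ) (hl : 0 ≤ lam) (hp : 0 ≤ p) (hq : 0 ≤ q) (hpq : p + q = 1)
    (m : ℕ) :
    ∑' n : ℕ, ENNReal.ofReal (Real.exp (-lam) * lam ^ n / n.factorial) *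
      ENNReal.ofReal ((n.choose m) * p ^ m * q ^ (n - m)) =
    ENNReal.ofReal (Real.exp (-(lam * p)) * (lam * p) ^ m / m.factorial) := by
  have key : ∀ t : ℕ,
      ENNReal.ofReal (Real.exp (-lam) * lam ^ (m + t) / (m + t).factorial) *
        ENNReal.ofReal (((m + t).choose m) * p ^ m * q ^ (m + t - m)) =
      ENNReal.ofReal (Real.exp (-lam) * (lam * p) ^ m / m.factorial) *
        ENNReal.ofReal ((lam * q) ^ t / t.factorial) := by
    intro t
    rw [← ENNReal.ofReal_mul (by positivity), ← ENNReal.ofReal_mul (by positivity)]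
    congr 1
    have hfac : ((m + t).choose m : ℝ) * (m.factorial * t.factorial) = (m + t).factorial := by
      have h := Nat.choose_mul_factorial_mul_factorial (Nat.le_add_right m t)
      rw [Nat.add_sub_cancel_left] at h
      push_cast [← h]; ring
    have h1 : ((m+t).factorial : ℝ) ≠ 0 := by positivity
    have h2 : (m.factorial : ℝ) ≠ 0 := by positivity
    have h3 : (t.factorial : ℝ) ≠ 0 := by positivity
    field_simp
    rw [← hfac]
    rw [Nat.add_sub_cancel_left]
    ring
  have hinj : Function.Injective (fun t : ℕ => m + t) := add_right_injective m
  have hsupp : Function.support (fun n : ℕ =>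
      ENNReal.ofReal (Real.exp (-lam) * lam ^ n / n.factorial) *
        ENNReal.ofReal ((n.choose m) * p ^ m * q ^ (n - m))) ⊆
      Set.range (fun t : ℕ => m + t) := by
    intro n hn
    by_contra hr
    have hnm : n < m := by
      by_contra h
      exact hr ⟨n - m, show m + (n - m) = n by omega⟩
    apply hn
    have : (n.choose m : ℝ) = 0 := by
      rw [Nat.choose_eq_zero_of_lt hnm]; simp
    simp [this]
  rw [← Function.Injective.tsum_eq hinj hsupp]
  rw [tsum_congr key, ENNReal.tsum_mul_left, tsum_ofReal_exp (by positivity),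
    ← ENNReal.ofReal_mul (by positivity)]
  congr 1
  rw [div_mul_eq_mul_div, mul_right_comm, ← Real.exp_add]
  have : -lam + lam * q = -(lam * p) := by nlinarith
  rw [this]

lemma my_outer (lam p q : ℝ) (k : ℕ) (hpq : p + q = 1) :
    ∑ j ∈ Finset.range (k+1),
      (Real.exp (-(lam*q)) * (lam*q)^j / j.factorial) *
      (Real.exp (-(lam*p)) * (lam*p)^(k-j) / (k-j).factorial)
    = Real.exp (-lam) * lam ^ k / k.factorial := by
  have h1 : ∀ j ∈ Finset.range (k+1),
      (Real.exp (-(lam*q)) * (lam*q)^j / j.factorial) *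
      (Real.exp (-(lam*p)) * (lam*p)^(k-j) / (k-j).factorial)
      = Real.exp (-lam) / k.factorial * ((lam*q)^j * (lam*p)^(k-j) * (k.choose j)) := by
    intro j hj
    have hjk : j ≤ k := Nat.lt_succ_iff.mp (Finset.mem_range.mp hj)
    have hfac := Nat.choose_mul_factorial_mul_factorial hjk
    have hc : (k.choose j : ℝ) * (j.factorial * (k-j).factorial) = k.factorial := by
      push_cast [← hfac]; ring
    have e : Real.exp (-(lam*q)) * Real.exp (-(lam*p)) = Real.exp (-lam) := by
      rw [← Real.exp_add]; congr 1; rw [← neg_add, ← mul_add, show q + p = 1 by linarith, mul_one]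
    have h1 : (j.factorial : ℝ) ≠ 0 := by positivity
    have h2 : ((k-j).factorial : ℝ) ≠ 0 := by positivity
    have h3 : (k.factorial : ℝ) ≠ 0 := by positivity
    field_simp
    rw [← hc, ← e]
    ring
  rw [Finset.sum_congr rfl h1, ← Finset.mul_sum, ← add_pow]
  rw [← mul_add, show q + p = 1 by linarith, mul_one]; ring

lemma my_grand (lam p q : ℝ) (hl : 0 ≤ lam) (hp : 0 ≤ p) (hq : 0 ≤ q) (hpq : p + q = 1)
    (k : ℕ) :
    ∑' j : ℕ, ∑' n : ℕ,
      ENNReal.ofReal (Real.exp (-(lam*q)) * (lam*q)^j / j.factorial) *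
      (ENNReal.ofReal (Real.exp (-lam) * lam^n / n.factorial) *
       ENNReal.ofReal (if j ≤ k then (n.choose (k-j) : ℝ) * p^(k-j) * q^(n-(k-j)) else 0))
    = ENNReal.ofReal (Real.exp (-lam) * lam ^ k / k.factorial) := by
  have hterm : ∀ j : ℕ,
      (∑' n : ℕ, ENNReal.ofReal (Real.exp (-(lam*q)) * (lam*q)^j / j.factorial) *
        (ENNReal.ofReal (Real.exp (-lam) * lam^n / n.factorial) *
         ENNReal.ofReal (if j ≤ k then (n.choose (k-j) : ℝ) * p^(k-j) * q^(n-(k-j)) else 0)))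
      = if j ≤ k then ENNReal.ofReal ((Real.exp (-(lam*q)) * (lam*q)^j / j.factorial) *
          (Real.exp (-(lam*p)) * (lam*p)^(k-j) / (k-j).factorial)) else 0 := by
    intro j
    rw [ENNReal.tsum_mul_left]
    by_cases hj : j ≤ k
    · simp only [hj, if_true]
      rw [my_inner_sum lam p q hl hp hq hpq (k-j),
        ← ENNReal.ofReal_mul (by positivity)]
    · simp only [hj, if_false]
      simp
  rw [tsum_congr hterm, tsum_eq_sum (s := Finset.range (k+1))
    (by intro j hj; simp only [Finset.mem_range, Nat.lt_succ_iff, not_le] at hj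
        simp [Nat.not_le.mpr hj, hj, show ¬ j ≤ k by omega])]
  have : ∀ j ∈ Finset.range (k+1),
      (if j ≤ k then ENNReal.ofReal ((Real.exp (-(lam*q)) * (lam*q)^j / j.factorial) *
          (Real.exp (-(lam*p)) * (lam*p)^(k-j) / (k-j).factorial)) else 0)
      = ENNReal.ofReal ((Real.exp (-(lam*q)) * (lam*q)^j / j.factorial) *
          (Real.exp (-(lam*p)) * (lam*p)^(k-j) / (k-j).factorial)) := by
    intro j hj
    simp [Nat.lt_succ_iff.mp (Finset.mem_range.mp hj)]
  rw [Finset.sum_congr rfl this,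
    ← ENNReal.ofReal_sum_of_nonneg (fun j _ => by positivity),
    my_outer lam p q k hpq]

lemma my_meas_sum {Ω : Type*} {m : MeasurableSpace Ω} {g : Ω → ℕ} {h : ℕ → Ω → ℕ}
    (hg : Measurable[m] g) (hh : ∀ i, Measurable[m] (h i)) :
    Measurable[m] fun ω => ∑ i ∈ Finset.range (g ω), h i ω := by
  apply measurable_to_countable'
  intro k
  have hset : (fun ω => ∑ i ∈ Finset.range (g ω), h i ω) ⁻¹' {k}
      = ⋃ n : ℕ, (g ⁻¹' {n}) ∩ ((fun ω => ∑ i ∈ Finset.range n, h i ω) ⁻¹' {k}) := by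
    ext ω
    simp only [Set.mem_preimage, Set.mem_singleton_iff, Set.mem_iUnion, Set.mem_inter_iff]
    exact ⟨fun hk => ⟨g ω, rfl, hk⟩, fun ⟨n, hn, hk⟩ => by rw [hn]; exact hk⟩
  rw [hset]
  exact MeasurableSet.iUnion fun n => (hg (measurableSet_singleton n)).inter
    ((Finset.measurable_sum _ fun i _ => hh i) (measurableSet_singleton k))

lemma my_nocycle {V : Type*} (pa : V → V) (r : V) (hr : pa r = r)
    (hreach : ∀ w, ∃ n, pa^[n] w = r) {v : V} (hv : v ≠ r) (k : ℕ) :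
    pa^[k] (pa v) ≠ v := by
  intro hcyc
  have hfix : pa^[k+1] v = v := by rw [Function.iterate_succ_apply]; exact hcyc
  obtain ⟨n, hn⟩ := hreach v
  have hcycm : pa^[(k+1)*n] v = v := by
    rw [Function.iterate_mul]; exact Function.iterate_fixed hfix n
  have hre : pa^[(k+1)*n] v = r := by
    obtain ⟨t, ht⟩ : ∃ t, (k+1)*n = t + n := ⟨k*n, by ring⟩
    rw [ht, Function.iterate_add_apply, hn, Function.iterate_fixed hr]
  exact hv (hcycm.symm.trans hre)

end MyAux

/-- every component of an MPMRF has the Poisson(λ) distribution. -/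
theorem mpmrf_marginals_poisson
    {V Ω : Type*} [Fintype V] [DecidableEq V] [MeasureSpace Ω]
    [IsProbabilityMeasure (ℙ : Measure Ω)]
    (d : ℕ) (hd : Fintype.card V = d)
    (G : SimpleGraph V) (hG : G.IsTree)
    (r : V) (pa : V → V) (hpa : IsParentMap G r pa)
    (lam : ℝ) (hlam : 0 < lam)
    (α : V → V → ℝ) (hα : ∀ a b, G.Adj a b → α a b ∈ Set.Ioo (0 : ℝ) 1)
    (N : V → Ω → ℕ) (hN : IsMPMRF lam α pa r N) :
    ∀ v : V, IsPoissonRV (N v) lam := by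
  obtain ⟨L, I, hInd, hLr, hLnr, hIber, hNr, hNrec⟩ := hN
  set F : (V ⊕ V × ℕ) → Ω → ℕ :=
    Sum.elim L (fun (p : V × ℕ) (ω : Ω) => (if I p.1 p.2 ω then 1 else 0 : ℕ)) with hFdef
  have hLmeas : ∀ w, Measurable (L w) := by
    intro w
    by_cases hw : w = r
    · subst hw; exact hLr.1
    · exact (hLnr w hw).1
  have hIndmeas : ∀ w i, Measurable (fun ω => (if I w i ω then 1 else 0 : ℕ)) := by
    intro w i
    have hms : MeasurableSet {ω | I w i ω = true} :=
      (hIber w i).1 (measurableSet_singleton true)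
    exact Measurable.ite hms measurable_const measurable_const
  have hFmeas : ∀ x, Measurable (F x) := by
    rintro (w | ⟨w, i⟩)
    · exact hLmeas w
    · exact hIndmeas w i
  set mm : (V ⊕ V × ℕ) → MeasurableSpace Ω :=
    fun x => MeasurableSpace.comap (F x) inferInstance with hmmdef
  have hmm_le : ∀ x, mm x ≤ (inferInstance : MeasurableSpace Ω) := fun x => (hFmeas x).comap_le
  have hIndep : iIndep mm ℙ := hInd
  set SA : Set V → Set (V ⊕ V × ℕ) :=
    fun B => {x | Sum.elim (· ∈ B) (fun pr => pr.1 ∈ B) x} with hSAdef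
  set MS : Set V → MeasurableSpace Ω := fun B => ⨆ x ∈ SA B, mm x with hMSdef
  have hMS_le : ∀ B, MS B ≤ (inferInstance : MeasurableSpace Ω) := fun B =>
    iSup₂_le fun x _ => hmm_le x
  have hcomap_le : ∀ (B : Set V) (x), x ∈ SA B → mm x ≤ MS B := fun B x hx =>
    le_biSup mm hx
  set anc : V → Set V := fun w => {x | ∃ n : ℕ, pa^[n] w = x} with hancdef
  have hanc_self : ∀ w, w ∈ anc w := fun w => ⟨0, rfl⟩
  have hanc_step : ∀ w, anc (pa w) ⊆ anc w := by
    rintro w x ⟨n, hn⟩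
    exact ⟨n + 1, by rw [Function.iterate_succ_apply]; exact hn⟩
  have hMS_mono : ∀ B C : Set V, B ⊆ C → MS B ≤ MS C := by
    intro B C hBC
    refine iSup₂_le fun x hx => hcomap_le C x ?_
    rcases x with w | pr
    · exact hBC hx
    · exact hBC hx
  have hNanc : ∀ (n : ℕ) (v : V), pa^[n] v = r → Measurable[MS (anc v)] (N v) := by
    intro n
    induction n with
    | zero =>
      intro v hv
      simp only [Function.iterate_zero, id] at hv
      subst hv
      rw [funext hNr]
      exact Measurable.of_comap_le (hcomap_le _ (Sum.inl v) (hanc_self v))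
    | succ n ih =>
      intro v hv
      by_cases hvr : v = r
      · subst hvr
        rw [funext hNr]
        exact Measurable.of_comap_le (hcomap_le _ (Sum.inl v) (hanc_self v))
      · have hu : pa^[n] (pa v) = r := by
          rw [← Function.iterate_succ_apply]; exact hv
        have hmu : Measurable[MS (anc v)] (N (pa v)) :=
          (ih (pa v) hu).mono (hMS_mono _ _ (hanc_step v)) le_rfl
        have hml : Measurable[MS (anc v)] (L v) :=
          Measurable.of_comap_le (hcomap_le _ (Sum.inl v) (hanc_self v))
        have hmi : ∀ i, Measurable[MS (anc v)] (fun ω => (if I v i ω then 1 else 0 : ℕ)) :=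
          fun i => Measurable.of_comap_le (hcomap_le _ (Sum.inr (v, i)) (hanc_self v))
        rw [funext (hNrec v hvr)]
        exact hml.add (my_meas_sum hmu hmi)
  have hNmeas : ∀ v, Measurable (N v) := by
    intro v
    obtain ⟨n, hn⟩ := hpa.2.2 v
    exact (hNanc n v hn).mono (hMS_le _) le_rfl
  have hlaw : ∀ (n : ℕ) (v : V), pa^[n] v = r → ∀ k : ℕ,
      (ℙ : Measure Ω) {ω | N v ω = k}
        = ENNReal.ofReal (Real.exp (-lam) * lam ^ k / (Nat.factorial k)) := by
    intro n
    induction n with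
    | zero =>
      intro v hv k
      simp only [Function.iterate_zero, id] at hv
      subst hv
      have hset : {ω | N v ω = k} = {ω | L v ω = k} := by
        ext ω; rw [Set.mem_setOf_eq, Set.mem_setOf_eq, hNr ω]
      rw [hset]
      exact hLr.2 k
    | succ n ih =>
      intro v hv k
      by_cases hvr : v = r
      · subst hvr
        have hset : {ω | N v ω = k} = {ω | L v ω = k} := by
          ext ω; rw [Set.mem_setOf_eq, Set.mem_setOf_eq, hNr ω]
        rw [hset]
        exact hLr.2 k
      · have hu : pa^[n] (pa v) = r := by
          rw [← Function.iterate_succ_apply]; exact hv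
        have IH := ih (pa v) hu
        set p : ℝ := α (pa v) v with hpdef
        have hp01 : p ∈ Set.Ioo (0 : ℝ) 1 := hα _ _ (hpa.2.1 v hvr)
        have hp : 0 ≤ p := le_of_lt hp01.1
        set q : ℝ := 1 - p with hqdef
        have hq : 0 ≤ q := by rw [hqdef]; linarith [hp01.2]
        have hpq : p + q = 1 := by rw [hqdef]; ring
        have hLvP : IsPoissonRV (L v) (lam * q) := hLnr v hvr
        set ind : ℕ → Ω → ℕ := fun i ω => if I v i ω then 1 else 0 with hinddef
        have hindm : ∀ i, Measurable (ind i) := fun i => hIndmeas v i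
        -- independence of ancestors of pa v from the new randomness at v
        have hvnotin : v ∉ anc (pa v) := by
          rintro ⟨t, ht⟩
          exact my_nocycle pa r hpa.1 hpa.2.2 hvr t ht
        have hdisjST : Disjoint (SA (anc (pa v))) (SA {v}) := by
          rw [Set.disjoint_left]
          rintro (w | ⟨w, i⟩) hx hy
          · simp only [hSAdef, Set.mem_setOf_eq, Sum.elim_inl, Set.mem_singleton_iff] at hx hy
            subst hy; exact hvnotin hx
          · simp only [hSAdef, Set.mem_setOf_eq, Sum.elim_inr, Set.mem_singleton_iff] at hx hy
            subst hy; exact hvnotin hx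
        have hIndepST : Indep (MS (anc (pa v))) (MS {v}) ℙ :=
          indep_iSup_of_disjoint hmm_le hIndep hdisjST
        have hLvMT : Measurable[MS {v}] (L v) :=
          Measurable.of_comap_le (hcomap_le {v} (Sum.inl v) rfl)
        have hindMT : ∀ i, Measurable[MS {v}] (ind i) :=
          fun i => Measurable.of_comap_le (hcomap_le {v} (Sum.inr (v, i)) rfl)
        -- probability of indicator values
        have hprob1 : ∀ i : ℕ, (ℙ : Measure Ω) (ind i ⁻¹' {1}) = ENNReal.ofReal p := by
          intro i
          have hset : ind i ⁻¹' {1} = I v i ⁻¹' {true} := by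
            ext ω
            simp only [hinddef, Set.mem_preimage, Set.mem_singleton_iff]
            by_cases hb : I v i ω <;> simp [hb]
          rw [hset]
          exact (hIber v i).2
        have hprob0 : ∀ i : ℕ, (ℙ : Measure Ω) (ind i ⁻¹' {0}) = ENNReal.ofReal q := by
          intro i
          have hset : ind i ⁻¹' {0} = (I v i ⁻¹' {true})ᶜ := by
            ext ω
            simp only [hinddef, Set.mem_preimage, Set.mem_singleton_iff, Set.mem_compl_iff]
            by_cases hb : I v i ω <;> simp [hb]
          have hb : (ℙ : Measure Ω) (I v i ⁻¹' {true}) = ENNReal.ofReal p := (hIber v i).2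
          rw [hset, prob_compl_eq_one_sub ((hIber v i).1 (measurableSet_singleton true)),
            hb, ← ENNReal.ofReal_one, ← ENNReal.ofReal_sub 1 hp, hqdef]
        -- the per-(j, m) cell computation
        have hcellval : ∀ j m : ℕ,
            (ℙ : Measure Ω) {ω | L v ω = j ∧ N (pa v) ω = m ∧
                j + ∑ i ∈ Finset.range m, ind i ω = k}
            = ENNReal.ofReal (Real.exp (-(lam*q)) * (lam*q)^j / j.factorial) *
              (ENNReal.ofReal (Real.exp (-lam) * lam^m / m.factorial) *
               ENNReal.ofReal (if j ≤ k then (m.choose (k-j) : ℝ) * p^(k-j) * q^(m-(k-j))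
                 else 0)) := by
          intro j m
          set Aj : ENNReal := ENNReal.ofReal (Real.exp (-(lam*q)) * (lam*q)^j / j.factorial)
            with hAjdef
          set B : ENNReal := ENNReal.ofReal (Real.exp (-lam) * lam^m / m.factorial) with hBdef
          set P : Finset (Finset ℕ) :=
            (Finset.range m).powerset.filter (fun s => j + s.card = k) with hPdef
          set cell : Finset ℕ → Set Ω := fun s =>
            (N (pa v) ⁻¹' {m}) ∩ ((L v ⁻¹' {j}) ∩ ⋂ i ∈ Finset.range m,
              ind i ⁻¹' {if i ∈ s then 1 else 0}) with hcelldef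
          have hsum_ind : ∀ (s : Finset ℕ), s ⊆ Finset.range m → ∀ ω,
              (∀ i ∈ Finset.range m, ind i ω = if i ∈ s then 1 else 0) →
              ∑ i ∈ Finset.range m, ind i ω = s.card := by
            intro s hsub ω hω
            rw [Finset.sum_congr rfl hω, Finset.sum_boole]
            rw [Finset.filter_mem_eq_inter, Finset.inter_eq_right.mpr hsub]
            simp
          have hFeq : {ω | L v ω = j ∧ N (pa v) ω = m ∧
              j + ∑ i ∈ Finset.range m, ind i ω = k} = ⋃ s ∈ P, cell s := by
            ext ω
            simp only [Set.mem_setOf_eq, Set.mem_iUnion, hcelldef, Set.mem_inter_iff,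
              Set.mem_preimage, Set.mem_singleton_iff, Set.mem_iInter,
              hPdef, Finset.mem_filter, Finset.mem_powerset]
            constructor
            · rintro ⟨h1, h2, h3⟩
              refine ⟨(Finset.range m).filter (fun i => I v i ω),
                ⟨Finset.filter_subset _ _, ?_⟩, h2, h1, ?_⟩
              · rw [← h3]; congr 1
                rw [Finset.sum_boole]; simp [hinddef]
              · intro i hi
                by_cases hI : I v i ω <;>
                  simp [hinddef, hI, Finset.mem_filter, hi]
            · rintro ⟨s, ⟨hsub, hcard⟩, h2, h1, h3⟩
              exact ⟨h1, h2, by rw [hsum_ind s hsub ω h3]; exact hcard⟩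
          have hcellm : ∀ s : Finset ℕ, MeasurableSet (cell s) := fun s =>
            ((hNmeas (pa v)) (measurableSet_singleton m)).inter
              (((hLmeas v) (measurableSet_singleton j)).inter
                (Finset.measurableSet_biInter _
                  fun i _ => (hindm i) (measurableSet_singleton _)))
          have hcelldisj : (↑P : Set (Finset ℕ)).PairwiseDisjoint cell := by
            intro s hs t ht hst
            simp only [Finset.mem_coe, hPdef, Finset.mem_filter, Finset.mem_powerset] at hs ht
            rw [Function.onFun, Set.disjoint_left]
            rintro ω ⟨-, -, h3⟩ ⟨-, -, h3'⟩
            apply hst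
            refine Finset.ext fun i => ?_
            by_cases hir : i ∈ Finset.range m
            · have e1 := Set.mem_iInter₂.mp h3 i hir
              have e2 := Set.mem_iInter₂.mp h3' i hir
              simp only [Set.mem_preimage, Set.mem_singleton_iff] at e1 e2
              rw [e1] at e2
              by_cases h1 : i ∈ s <;> by_cases h2 : i ∈ t <;> simp [h1, h2] at e2 ⊢
            · exact ⟨fun h => absurd (hs.1 h) hir, fun h => absurd (ht.1 h) hir⟩
          have hAmeas : MeasurableSet[MS (anc (pa v))] (N (pa v) ⁻¹' {m}) :=
            hNanc n (pa v) hu (measurableSet_singleton m)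
          have hBmeas : ∀ s : Finset ℕ, MeasurableSet[MS {v}]
              ((L v ⁻¹' {j}) ∩ ⋂ i ∈ Finset.range m, ind i ⁻¹' {if i ∈ s then 1 else 0}) := by
            intro s
            exact (hLvMT (measurableSet_singleton j)).inter
              (Finset.measurableSet_biInter _
                fun i _ => (hindMT i) (measurableSet_singleton _))
          -- product structure of the local events
          have hBval : ∀ s : Finset ℕ,
              (ℙ : Measure Ω) ((L v ⁻¹' {j}) ∩ ⋂ i ∈ Finset.range m,
                ind i ⁻¹' {if i ∈ s then 1 else 0})
              = (ℙ : Measure Ω) (L v ⁻¹' {j}) *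
                ∏ i ∈ Finset.range m, (ℙ : Measure Ω) (ind i ⁻¹' {if i ∈ s then 1 else 0}) := by
            intro s
            classical
            have hnotmem : (Sum.inl v : V ⊕ V × ℕ) ∉
                (Finset.range m).image (fun i => (Sum.inr (v, i) : V ⊕ V × ℕ)) := by
              simp
            have hinj : ∀ a ∈ Finset.range m, ∀ b ∈ Finset.range m,
                (Sum.inr (v, a) : V ⊕ V × ℕ) = Sum.inr (v, b) → a = b := by
              intro a _ b _ h
              simpa using h
            have hprod := hInd.measure_inter_preimage_eq_mul
              (S := insert (Sum.inl v) ((Finset.range m).image fun i => Sum.inr (v, i)))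
              (sets := fun x => Sum.elim (fun _ => ({j} : Set ℕ))
                (fun pr => ({if pr.2 ∈ s then 1 else 0} : Set ℕ)) x)
              (fun x _ => by rcases x with w | pr <;> exact measurableSet_singleton _)
            rw [Finset.set_biInter_insert, Finset.set_biInter_finset_image,
              Finset.prod_insert hnotmem, Finset.prod_image hinj] at hprod
            simp only [hFdef, Sum.elim_inl, Sum.elim_inr] at hprod
            exact hprod
          have hLvj : (ℙ : Measure Ω) (L v ⁻¹' {j}) = Aj := hLvP.2 j
          have hprodval : ∀ s : Finset ℕ, s ⊆ Finset.range m →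
              ∏ i ∈ Finset.range m, (ℙ : Measure Ω) (ind i ⁻¹' {if i ∈ s then 1 else 0})
              = ENNReal.ofReal (p ^ s.card * q ^ (m - s.card)) := by
            intro s hsub
            have hterm : ∀ i ∈ Finset.range m,
                (ℙ : Measure Ω) (ind i ⁻¹' {if i ∈ s then 1 else 0})
                = if i ∈ s then ENNReal.ofReal p else ENNReal.ofReal q := by
              intro i _
              by_cases hi : i ∈ s
              · simp only [hi, if_true]; exact hprob1 i
              · simp only [hi, if_false]; exact hprob0 i
            have h1 : (Finset.range m).filter (fun i => i ∈ s) = s := by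
              ext i
              simp only [Finset.mem_filter]
              exact ⟨fun h => h.2, fun h => ⟨hsub h, h⟩⟩
            have h2 : (Finset.range m).filter (fun i => ¬ i ∈ s) = Finset.range m \ s := by
              ext i
              simp [Finset.mem_filter, Finset.mem_sdiff]
            rw [Finset.prod_congr rfl hterm, Finset.prod_ite, Finset.prod_const,
              Finset.prod_const, h1, h2, Finset.card_sdiff_of_subset hsub, Finset.card_range,
              ENNReal.ofReal_mul (by positivity), ENNReal.ofReal_pow hp, ENNReal.ofReal_pow hq]
          have hcellprob : ∀ s ∈ P, (ℙ : Measure Ω) (cell s)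
              = B * (Aj * ENNReal.ofReal (p ^ s.card * q ^ (m - s.card))) := by
            intro s hs
            have hsP : s ∈ (Finset.range m).powerset.filter (fun s => j + s.card = k) := hs
            have hsub : s ⊆ Finset.range m :=
              Finset.mem_powerset.mp (Finset.mem_filter.mp hsP).1
            rw [hcelldef]
            rw [(Indep_iff _ _ ℙ).mp hIndepST _ _ hAmeas (hBmeas s), hBval s, hLvj,
              hprodval s hsub]
            congr 1
            exact IH m
          have hPsum : ∑ s ∈ P, (B * (Aj * ENNReal.ofReal (p ^ s.card * q ^ (m - s.card))))
              = Aj * (B * ENNReal.ofReal (if j ≤ k then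
                  (m.choose (k-j) : ℝ) * p^(k-j) * q^(m-(k-j)) else 0)) := by
            by_cases hj : j ≤ k
            · have hP : P = Finset.powersetCard (k - j) (Finset.range m) := by
                rw [hPdef, Finset.powersetCard_eq_filter]
                apply Finset.filter_congr
                intro s _
                constructor
                · intro h; omega
                · intro h; omega
              rw [hP]
              have hconst : ∀ s ∈ Finset.powersetCard (k-j) (Finset.range m),
                  B * (Aj * ENNReal.ofReal (p ^ s.card * q ^ (m - s.card)))
                  = B * (Aj * ENNReal.ofReal (p ^ (k-j) * q ^ (m - (k-j)))) := by
                intro s hs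
                rw [(Finset.mem_powersetCard.mp hs).2]
              rw [Finset.sum_congr rfl hconst, Finset.sum_const, Finset.card_powersetCard,
                Finset.card_range, nsmul_eq_mul]
              simp only [hj, if_true]
              have hmerge : ENNReal.ofReal ((m.choose (k-j) : ℝ) * p^(k-j) * q^(m-(k-j)))
                  = (m.choose (k-j) : ENNReal) * ENNReal.ofReal (p^(k-j) * q^(m-(k-j))) := by
                rw [mul_assoc, ENNReal.ofReal_mul (Nat.cast_nonneg _), ENNReal.ofReal_natCast]
              rw [hmerge]
              ring
            · have hP : P = ∅ := by
                rw [hPdef]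
                apply Finset.filter_false_of_mem
                intro s _
                omega
              rw [hP]
              simp [hj]
          rw [hFeq, measure_biUnion_finset hcelldisj (fun s _ => hcellm s),
            Finset.sum_congr rfl hcellprob, hPsum]
        -- global assembly
        have hEunion : {ω | N v ω = k} = ⋃ x : ℕ × ℕ,
            {ω | L v ω = x.1 ∧ N (pa v) ω = x.2 ∧
              x.1 + ∑ i ∈ Finset.range x.2, ind i ω = k} := by
          ext ω
          simp only [Set.mem_setOf_eq, Set.mem_iUnion]
          constructor
          · intro hk
            refine ⟨(L v ω, N (pa v) ω), rfl, rfl, ?_⟩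
            show L v ω + ∑ i ∈ Finset.range (N (pa v) ω), ind i ω = k
            simp only [hinddef]
            rw [← hNrec v hvr ω]
            exact hk
          · rintro ⟨⟨j, m⟩, h1, h2, h3⟩
            simp only [hinddef] at h3
            rw [hNrec v hvr ω, h1, h2]
            exact h3
        have hFevm : ∀ x : ℕ × ℕ, MeasurableSet {ω | L v ω = x.1 ∧ N (pa v) ω = x.2 ∧
            x.1 + ∑ i ∈ Finset.range x.2, ind i ω = k} := by
          rintro ⟨j, m⟩
          have h3 : Measurable fun ω => j + ∑ i ∈ Finset.range m, ind i ω :=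
            (Finset.measurable_sum _ fun i _ => hindm i).const_add j
          exact ((hLmeas v) (measurableSet_singleton j)).inter
            (((hNmeas (pa v)) (measurableSet_singleton m)).inter
              (h3 (measurableSet_singleton k)))
        have hdisjF : Pairwise (Function.onFun Disjoint (fun x : ℕ × ℕ =>
            {ω | L v ω = x.1 ∧ N (pa v) ω = x.2 ∧
              x.1 + ∑ i ∈ Finset.range x.2, ind i ω = k})) := by
          rintro ⟨j, m⟩ ⟨j', m'⟩ hne
          rw [Function.onFun, Set.disjoint_left]
          rintro ω ⟨h1, h2, -⟩ ⟨h1', h2', -⟩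
          exact hne (Prod.ext_iff.mpr ⟨h1.symm.trans h1', h2.symm.trans h2'⟩)
        calc (ℙ : Measure Ω) {ω | N v ω = k}
            = ∑' x : ℕ × ℕ, (ℙ : Measure Ω) {ω | L v ω = x.1 ∧ N (pa v) ω = x.2 ∧
                x.1 + ∑ i ∈ Finset.range x.2, ind i ω = k} := by
              rw [hEunion, measure_iUnion hdisjF hFevm]
          _ = ∑' j : ℕ, ∑' m : ℕ, (ℙ : Measure Ω) {ω | L v ω = j ∧ N (pa v) ω = m ∧
                j + ∑ i ∈ Finset.range m, ind i ω = k} :=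
              ENNReal.tsum_prod (f := fun j m => (ℙ : Measure Ω) {ω | L v ω = j ∧
                N (pa v) ω = m ∧ j + ∑ i ∈ Finset.range m, ind i ω = k})
          _ = ∑' j : ℕ, ∑' m : ℕ,
                ENNReal.ofReal (Real.exp (-(lam*q)) * (lam*q)^j / j.factorial) *
                (ENNReal.ofReal (Real.exp (-lam) * lam^m / m.factorial) *
                 ENNReal.ofReal (if j ≤ k then (m.choose (k-j) : ℝ) * p^(k-j) * q^(m-(k-j))
                   else 0)) :=
              tsum_congr fun j => tsum_congr fun m => hcellval j m
          _ = ENNReal.ofReal (Real.exp (-lam) * lam ^ k / k.factorial) :=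
              my_grand lam p q (le_of_lt hlam) hp hq hpq k
  intro v
  obtain ⟨n, hn⟩ := hpa.2.2 v
  exact ⟨hNmeas v, hlaw n v hn⟩

end
end

section
/- The MPMRF vector satisfies the local Markov property of its tree: if T=(V,E) is a tree on d vertices rooted at r, λ>0, α∈(0,1)^{d−1}, and N=(N_v)_{v∈V}∼MPMRF(λ,α,T), then for all u,w∈V with u≠w and (u,w)∉E, the random variables N_u and N_w are conditionally independent given the σ-algebra generated by the family {N_j : (u,j)∈E}. -/
open MeasureTheory ProbabilityTheory
open scoped ENNReal Classical

noncomputable section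

/- ======================== auxiliary lemmas ======================== -/

lemma mpmrf_aux_sum_meas {Ω : Type*} {m : MeasurableSpace Ω} {g : Ω → ℕ} {f : ℕ → Ω → ℕ}
    (hg : Measurable[m] g) (hf : ∀ i, Measurable[m] (f i)) :
    Measurable[m] (fun ω => ∑ i ∈ Finset.range (g ω), f i ω) := by
  apply measurable_to_countable'
  intro k
  have hset : (fun ω => ∑ i ∈ Finset.range (g ω), f i ω) ⁻¹' {k}
      = ⋃ n, (g ⁻¹' {n}) ∩ {ω | ∑ i ∈ Finset.range n, f i ω = k} := by
    ext ω
    simp only [Set.mem_preimage, Set.mem_singleton_iff, Set.mem_iUnion, Set.mem_inter_iff,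
      Set.mem_setOf_eq]
    constructor
    · intro h; exact ⟨g ω, rfl, h⟩
    · rintro ⟨n, hn, h⟩; rw [hn]; exact h
  rw [hset]
  refine MeasurableSet.iUnion fun n => (hg (measurableSet_singleton n)).inter ?_
  have : Measurable[m] (fun ω => ∑ i ∈ Finset.range n, f i ω) :=
    Finset.measurable_sum _ (fun i _ => hf i)
  exact this (measurableSet_singleton k)

lemma mpmrf_aux_condexp_discrete {Ω γ : Type*} [mΩ : MeasurableSpace Ω] {μ : Measure Ω}
    [IsProbabilityMeasure μ] [Countable γ] [MeasurableSpace γ] [MeasurableSingletonClass γ]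
    {Z : Ω → γ} (hZ : Measurable Z) (hle : MeasurableSpace.comap Z inferInstance ≤ mΩ)
    {A : Set Ω} (hA : MeasurableSet A) :
    (fun ω => (μ (A ∩ Z ⁻¹' {Z ω}) / μ (Z ⁻¹' {Z ω})).toReal)
      =ᵐ[μ] μ⟦A | MeasurableSpace.comap Z inferInstance⟧ := by
  set ρ : γ → ℝ := fun y => (μ (A ∩ Z ⁻¹' {y}) / μ (Z ⁻¹' {y})).toReal with hρ
  have hg_meas' : Measurable[MeasurableSpace.comap Z inferInstance] (fun ω => ρ (Z ω)) := by
    intro t _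
    exact ⟨ρ ⁻¹' t, (Set.to_countable _).measurableSet, rfl⟩
  have hg_meas : Measurable (fun ω => ρ (Z ω)) := hg_meas'.mono hle le_rfl
  have hbound : ∀ ω, ‖ρ (Z ω)‖ ≤ 1 := by
    intro ω
    rw [Real.norm_eq_abs, abs_of_nonneg ENNReal.toReal_nonneg]
    have h1 : μ (A ∩ Z ⁻¹' {Z ω}) / μ (Z ⁻¹' {Z ω}) ≤ 1 := by
      apply ENNReal.div_le_of_le_mul
      rw [one_mul]
      exact measure_mono Set.inter_subset_right
    simpa using ENNReal.toReal_mono (by simp) h1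
  have hg_int : Integrable (fun ω => ρ (Z ω)) μ :=
    Integrable.mono' (integrable_const 1) hg_meas.aestronglyMeasurable
      (Filter.Eventually.of_forall hbound)
  have hf_int : Integrable (A.indicator (fun _ => (1:ℝ))) μ :=
    (integrable_const (1:ℝ)).indicator hA
  refine (ae_eq_condExp_of_forall_setIntegral_eq hle hf_int
    (fun s _ _ => hg_int.integrableOn) ?_ ?_)
  · rintro sΩ ⟨S, _, rfl⟩ -
    have hun : Z ⁻¹' S = ⋃ z : S, Z ⁻¹' {(z : γ)} := by
      ext ω; simp
    have hmz : ∀ z : S, MeasurableSet (Z ⁻¹' {(z : γ)}) :=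
      fun z => hZ (measurableSet_singleton _)
    have hdisj : Pairwise (Function.onFun Disjoint fun z : S => Z ⁻¹' {(z : γ)}) := by
      intro a b hab
      refine Set.disjoint_left.mpr fun ω h1 h2 => hab ?_
      exact Subtype.ext ((Set.mem_preimage.mp h1).symm.trans (Set.mem_preimage.mp h2))
    rw [hun, integral_iUnion hmz hdisj (hg_int.integrableOn),
      integral_iUnion hmz hdisj (hf_int.integrableOn)]
    refine tsum_congr fun z => ?_
    have h1 : ∫ x in Z ⁻¹' {(z : γ)}, ρ (Z x) ∂μ = (μ (Z ⁻¹' {(z : γ)})).toReal • ρ (z : γ) := by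
      rw [setIntegral_congr_fun (hmz z) (g := fun _ => ρ (z : γ))
        (fun ω hω => by rw [Set.mem_preimage, Set.mem_singleton_iff] at hω; rw [hω]),
        setIntegral_const]
      rfl
    have h2 : ∫ x in Z ⁻¹' {(z : γ)}, A.indicator (fun _ => (1:ℝ)) x ∂μ
        = (μ (A ∩ Z ⁻¹' {(z : γ)})).toReal := by
      rw [setIntegral_indicator hA]
      simp [Measure.restrict_apply hA, Set.inter_comm]
      rfl
    rw [h1, h2]
    rcases eq_or_ne (μ (Z ⁻¹' {(z : γ)})) 0 with h0 | h0
    · have : μ (A ∩ Z ⁻¹' {(z : γ)}) = 0 :=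
        measure_mono_null Set.inter_subset_right h0
      simp [hρ, h0, this]
    · have hfin : (μ (Z ⁻¹' {(z : γ)})).toReal ≠ 0 :=
        ENNReal.toReal_ne_zero.mpr ⟨h0, measure_ne_top _ _⟩
      rw [hρ]
      simp only [smul_eq_mul]
      rw [ENNReal.toReal_div]
      field_simp
  · exact StronglyMeasurable.aestronglyMeasurable (Measurable.stronglyMeasurable hg_meas')

lemma mpmrf_aux_condIndepFun_of_factor {Ω γ : Type*} [mΩ : MeasurableSpace Ω]
    [StandardBorelSpace Ω] {μ : Measure Ω} [IsProbabilityMeasure μ]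
    [Countable γ] [MeasurableSpace γ] [MeasurableSingletonClass γ]
    {Z : Ω → γ} (hZ : Measurable Z) {X Y : Ω → ℕ} (hX : Measurable X) (hY : Measurable Y)
    (m' : MeasurableSpace Ω) (hm'eq : m' = MeasurableSpace.comap Z inferInstance)
    (hm' : m' ≤ mΩ)
    (hfac : ∀ (s t : Set ℕ) (z : γ),
      μ (X ⁻¹' s ∩ Y ⁻¹' t ∩ Z ⁻¹' {z}) * μ (Z ⁻¹' {z})
        = μ (X ⁻¹' s ∩ Z ⁻¹' {z}) * μ (Y ⁻¹' t ∩ Z ⁻¹' {z})) :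
    CondIndepFun m' hm' X Y μ := by
  subst hm'eq
  rw [condIndepFun_iff_condExp_inter_preimage_eq_mul (μ := μ) (hm' := hm') hX hY]
  intro s t hs ht
  have hAB := mpmrf_aux_condexp_discrete (μ := μ) hZ hm' ((hX hs).inter (hY ht))
  have hA := mpmrf_aux_condexp_discrete (μ := μ) hZ hm' (hX hs)
  have hB := mpmrf_aux_condexp_discrete (μ := μ) hZ hm' (hY ht)
  have hnull : ∀ᵐ ω ∂μ, μ (Z ⁻¹' {Z ω}) ≠ 0 := by
    rw [ae_iff]
    push_neg
    have hset : {ω | μ (Z ⁻¹' {Z ω}) = 0} = ⋃ z ∈ {y : γ | μ (Z ⁻¹' {y}) = 0}, Z ⁻¹' {z} := by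
      ext ω
      simp only [Set.mem_setOf_eq, Set.mem_iUnion, Set.mem_preimage, Set.mem_singleton_iff]
      exact ⟨fun h => ⟨Z ω, h, rfl⟩, by rintro ⟨y, hy, rfl⟩; exact hy⟩
    rw [hset]
    exact (measure_biUnion_null_iff (Set.to_countable _)).mpr fun z hz => hz
  have hptw : (fun ω => (μ ((X ⁻¹' s ∩ Y ⁻¹' t) ∩ Z ⁻¹' {Z ω}) / μ (Z ⁻¹' {Z ω})).toReal)
      =ᵐ[μ] fun ω => (μ ((X ⁻¹' s) ∩ Z ⁻¹' {Z ω}) / μ (Z ⁻¹' {Z ω})).toReal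
        * (μ ((Y ⁻¹' t) ∩ Z ⁻¹' {Z ω}) / μ (Z ⁻¹' {Z ω})).toReal := by
    filter_upwards [hnull] with ω hω
    set a := μ ((X ⁻¹' s ∩ Y ⁻¹' t) ∩ Z ⁻¹' {Z ω})
    set b := μ ((X ⁻¹' s) ∩ Z ⁻¹' {Z ω})
    set c := μ ((Y ⁻¹' t) ∩ Z ⁻¹' {Z ω})
    set m := μ (Z ⁻¹' {Z ω})
    have key : a.toReal * m.toReal = b.toReal * c.toReal := by
      rw [← ENNReal.toReal_mul, ← ENNReal.toReal_mul, hfac s t (Z ω)]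
    have hm0 : m.toReal ≠ 0 := ENNReal.toReal_ne_zero.mpr ⟨hω, measure_ne_top _ _⟩
    rw [ENNReal.toReal_div, ENNReal.toReal_div, ENNReal.toReal_div, div_mul_div_comm,
      div_eq_div_iff hm0 (mul_ne_zero hm0 hm0)]
    rw [← mul_assoc, key]
  exact (hAB.symm.trans hptw).trans (hA.mul hB)

lemma mpmrf_aux_iter_root {V : Type*} {G : SimpleGraph V} {r : V} {pa : V → V}
    (hpa : IsParentMap G r pa) (k : ℕ) : pa^[k] r = r :=
  Function.iterate_fixed hpa.1 k

lemma mpmrf_aux_periodic {V : Type*} {G : SimpleGraph V} {r : V} {pa : V → V}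
    (hpa : IsParentMap G r pa) {v : V} {k : ℕ} (hk : pa^[k + 1] v = v) : v = r := by
  obtain ⟨n, hn⟩ := hpa.2.2 v
  have hfix : ∀ m : ℕ, pa^[m * (k + 1)] v = v := by
    intro m
    rw [mul_comm, Function.iterate_mul]
    exact Function.iterate_fixed hk m
  have hge : n ≤ n * (k + 1) := Nat.le_mul_of_pos_right n (Nat.succ_pos k)
  have : pa^[n * (k + 1)] v = r := by
    have := Function.iterate_add_apply pa (n * (k + 1) - n) n v
    rw [Nat.sub_add_cancel hge] at this
    rw [this, hn, mpmrf_aux_iter_root hpa]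
  rw [hfix n] at this
  exact this

lemma mpmrf_aux_parent_edge {V : Type*} [Fintype V] [DecidableEq V] {G : SimpleGraph V}
    (hG : G.IsTree) {r : V} {pa : V → V} (hpa : IsParentMap G r pa)
    {a b : V} (hadj : G.Adj a b) : pa a = b ∨ pa b = a := by
  classical
  haveI : Fintype G.edgeSet := Fintype.ofFinite _
  set T : Finset V := Finset.univ.erase r with hT
  have hmemT : ∀ v : V, v ∈ T ↔ v ≠ r := by
    intro v; simp [hT]
  have hinj : Set.InjOn (fun v => s(pa v, v)) T := by
    intro x hx y hy hxy
    rw [Sym2.eq_iff] at hxy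
    rcases hxy with ⟨_, h2⟩ | ⟨h1, h2⟩
    · exact h2
    · exfalso
      have : pa^[1 + 1] x = x := by
        simp only [Function.iterate_succ, Function.iterate_zero, Function.comp_apply, id_eq]
        rw [h1, ← h2]
      exact ((hmemT x).mp hx) (mpmrf_aux_periodic hpa this)
  have himg : Finset.image (fun v => s(pa v, v)) T ⊆ G.edgeFinset := by
    intro e he
    rw [Finset.mem_image] at he
    obtain ⟨v, hv, rfl⟩ := he
    rw [SimpleGraph.mem_edgeFinset, SimpleGraph.mem_edgeSet]
    exact hpa.2.1 v ((hmemT v).mp hv)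
  have hcardT : T.card + 1 = Fintype.card V := by
    rw [hT, Finset.card_erase_of_mem (Finset.mem_univ r), Finset.card_univ]
    have : 0 < Fintype.card V := Fintype.card_pos_iff.mpr ⟨r⟩
    omega
  have hcard : G.edgeFinset.card ≤ (Finset.image (fun v => s(pa v, v)) T).card := by
    rw [Finset.card_image_of_injOn hinj]
    have := hG.card_edgeFinset
    omega
  have heq : Finset.image (fun v => s(pa v, v)) T = G.edgeFinset :=
    Finset.eq_of_subset_of_card_le himg hcard
  have hmem : s(a, b) ∈ Finset.image (fun v => s(pa v, v)) T := by
    rw [heq, SimpleGraph.mem_edgeFinset, SimpleGraph.mem_edgeSet]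
    exact hadj
  rw [Finset.mem_image] at hmem
  obtain ⟨v, _, hv⟩ := hmem
  rw [Sym2.eq_iff] at hv
  rcases hv with ⟨h1, h2⟩ | ⟨h1, h2⟩
  · right; rw [h2] at h1; exact h1
  · left; rw [h2] at h1; exact h1

/- the master computation: measurability and the pmf factorization -/
lemma mpmrf_aux_master {V Ω : Type*} [Fintype V] [DecidableEq V] [MeasureSpace Ω]
    (G : SimpleGraph V) (hG : G.IsTree)
    (r : V) (pa : V → V) (hpa : IsParentMap G r pa)
    (lam : ℝ) (α : V → V → ℝ)
    (N : V → Ω → ℕ) (hN : IsMPMRF lam α pa r N)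
    (u w : V) (huw : u ≠ w) (hnadj : ¬ G.Adj u w) :
    (∀ v, Measurable (N v)) ∧
    Measurable (fun (ω : Ω) (j : ↥{j : V | G.Adj u j}) => N j.1 ω) ∧
    ∀ (s t : Set ℕ) (z : ↥{j : V | G.Adj u j} → ℕ),
      ℙ (N u ⁻¹' s ∩ N w ⁻¹' t ∩ (fun (ω : Ω) (j : ↥{j : V | G.Adj u j}) => N j.1 ω) ⁻¹' {z})
          * ℙ ((fun (ω : Ω) (j : ↥{j : V | G.Adj u j}) => N j.1 ω) ⁻¹' {z})
        = ℙ (N u ⁻¹' s ∩ (fun (ω : Ω) (j : ↥{j : V | G.Adj u j}) => N j.1 ω) ⁻¹' {z})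
          * ℙ (N w ⁻¹' t ∩ (fun (ω : Ω) (j : ↥{j : V | G.Adj u j}) => N j.1 ω) ⁻¹' {z}) := by

  classical
  obtain ⟨L, I, hIndep, hPr, hPv, hBer, hNr, hNrec⟩ := hN
  set K : (V ⊕ V × ℕ) → Ω → ℕ :=
    Sum.elim L (fun (p : V × ℕ) (ω : Ω) => (if I p.1 p.2 ω then 1 else 0 : ℕ)) with hK
  have hLmeas : ∀ v, Measurable (L v) := by
    intro v; by_cases hv : v = r
    · subst hv; exact hPr.1
    · exact (hPv v hv).1
  have hImeas : ∀ v i, Measurable (fun ω => (if I v i ω then 1 else 0 : ℕ)) := by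
    intro v i
    exact (measurable_of_countable (fun b : Bool => (if b then 1 else 0 : ℕ))).comp (hBer v i).1
  have hKmeas : ∀ i, Measurable (K i) := by
    rintro (v | q)
    · exact hLmeas v
    · exact hImeas q.1 q.2
  set MS : Set V → MeasurableSpace Ω := fun A =>
    ⨆ i ∈ {i : V ⊕ V × ℕ | Sum.elim id Prod.fst i ∈ A},
      MeasurableSpace.comap (K i) inferInstance with hMS
  have hMSle : ∀ A, MS A ≤ (MeasureSpace.toMeasurableSpace : MeasurableSpace Ω) := by
    intro A
    exact iSup₂_le fun i _ => (hKmeas i).comap_le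
  have hKmem : ∀ (A : Set V) (i : V ⊕ V × ℕ), Sum.elim id Prod.fst i ∈ A →
      Measurable[MS A] (K i) := by
    intro A i hi
    have h1 : MeasurableSpace.comap (K i) inferInstance ≤ MS A := by
      rw [hMS]
      exact le_iSup₂ (f := fun i _ => MeasurableSpace.comap (K i) inferInstance) i hi
    exact Measurable.mono (Measurable.of_comap_le le_rfl) h1 le_rfl
  have hLmem : ∀ (A : Set V) (v : V), v ∈ A → Measurable[MS A] (L v) :=
    fun A v hv => hKmem A (Sum.inl v) hv
  have hImem : ∀ (A : Set V) (v : V), v ∈ A → ∀ i,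
      Measurable[MS A] (fun ω => (if I v i ω then 1 else 0 : ℕ)) :=
    fun A v hv i => hKmem A (Sum.inr (v, i)) hv
  have hIndepMS : ∀ (A B : Set V), Disjoint A B → ∀ s t : Set Ω,
      MeasurableSet[MS A] s → MeasurableSet[MS B] t → ℙ (s ∩ t) = ℙ s * ℙ t := by
    intro A B hAB s t hs ht
    have hdisj : Disjoint {i : V ⊕ V × ℕ | Sum.elim id Prod.fst i ∈ A}
        {i : V ⊕ V × ℕ | Sum.elim id Prod.fst i ∈ B} := by
      rw [Set.disjoint_left]
      intro i hiA hiB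
      exact (Set.disjoint_left.mp hAB) hiA hiB
    have hind := indep_iSup_of_disjoint (fun i => (hKmeas i).comap_le) hIndep.iIndep hdisj
    exact (Indep_iff _ _ _).mp hind s t hs ht
  have hNmemAux : ∀ (A : Set V) (n : ℕ) (v : V), pa^[n] v = r → (∀ k, pa^[k] v ∈ A) →
      Measurable[MS A] (N v) := by
    intro A n
    induction n using Nat.strong_induction_on with
    | _ n IH =>
      intro v hv hanc
      by_cases hvr : v = r
      · have hNL : N v = L v := by rw [hvr]; exact funext hNr
        rw [hNL]
        exact hLmem A v (hanc 0)
      · match n, hv with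
        | 0, hv => exact absurd hv hvr
        | (n + 1), hv =>
          have hpav : pa^[n] (pa v) = r := by
            rw [← Function.iterate_succ_apply]; exact hv
          have hpaanc : ∀ k, pa^[k] (pa v) ∈ A := by
            intro k; rw [← Function.iterate_succ_apply]; exact hanc (k + 1)
          have hmpa := IH n (Nat.lt_succ_self n) (pa v) hpav hpaanc
          have hNv : N v = fun ω => L v ω + ∑ i ∈ Finset.range (N (pa v) ω),
              (if I v i ω then 1 else 0) := funext (hNrec v hvr)
          rw [hNv]
          exact Measurable.add (hLmem A v (hanc 0))
            (mpmrf_aux_sum_meas hmpa (hImem A v (hanc 0)))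
  have hNmem : ∀ (A : Set V) (v : V), (∀ k, pa^[k] v ∈ A) → Measurable[MS A] (N v) :=
    fun A v h => (hpa.2.2 v).elim fun q hq => hNmemAux A q v hq h
  have hNmeas : ∀ v, Measurable (N v) := fun v =>
    ((hNmem Set.univ v fun k => Set.mem_univ _).mono (hMSle _) le_rfl)
  -- the conditioning map
  refine ⟨hNmeas, measurable_pi_lambda _ (fun j => hNmeas j.1), ?_⟩
  set ne := {j : V | G.Adj u j} with hne
  set Z : Ω → (↥ne → ℕ) := fun ω j => N j.1 ω with hZdef
  intro s t z
  by_cases hcase : ∃ n : ℕ, pa^[n] w = u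
  · -- CASE A : w is a strict descendant of u
    have hn : pa^[Nat.find hcase] w = u := Nat.find_spec hcase
    have hn0 : Nat.find hcase ≠ 0 := by
      intro h0
      rw [h0] at hn
      exact huw hn.symm
    obtain ⟨n', hn'⟩ : ∃ n', Nat.find hcase = n' + 1 :=
      ⟨Nat.find hcase - 1, (Nat.succ_pred_eq_of_pos (Nat.pos_of_ne_zero hn0)).symm⟩
    set c := pa^[n'] w with hcdef
    have hnn : pa^[n' + 1] w = u := by rw [← hn']; exact hn
    have hpac : pa c = u := by
      rw [hcdef, ← Function.iterate_succ_apply' pa n' w]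
      exact hnn
    have hcu : c ≠ u := by
      rw [hcdef]
      exact Nat.find_min hcase (by omega)
    have hcr : c ≠ r := by
      intro h
      have hur' : u = r := by rw [← hpac, h, hpa.1]
      exact hcu (h.trans hur'.symm)
    have hwr_of : w = r → False := by
      intro hwr
      apply huw
      rw [← hnn, hwr, mpmrf_aux_iter_root hpa]
    have hcw : c ≠ w := by
      intro h
      rw [hcdef] at h
      match n', h with
      | 0, h =>
        have hwr : w ≠ r := fun hh => hwr_of hh
        have hpw : pa w = u := by
          have := hpac
          rw [hcdef] at this
          simpa using this
        have hadj : G.Adj u w := by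
          have h2 := hpa.2.1 w hwr
          rwa [hpw] at h2
        exact hnadj hadj
      | (m + 1), h =>
        exact hwr_of (mpmrf_aux_periodic hpa h)
    set Bc := {x : V | ∃ k : ℕ, pa^[k] x = c} with hBc
    set D := Bc \ {c} with hD
    have hcanc : ∀ k, pa^[k] c ∉ D := by
      intro k hk
      obtain ⟨⟨m, hm⟩, hne'⟩ := hk
      rw [← Function.iterate_add_apply] at hm
      match hmk : m + k, hm with
      | 0, hm =>
        have hk0 : k = 0 := by omega
        apply hne'
        rw [hk0]
        rfl
      | (q + 1), hm =>
        exact hcr (mpmrf_aux_periodic hpa hm)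
    have hnotB : ∀ x : V, x ∉ Bc → ∀ k, pa^[k] x ∉ D := by
      intro x hx k hk
      obtain ⟨⟨m, hm⟩, _⟩ := hk
      rw [← Function.iterate_add_apply] at hm
      exact hx ⟨m + k, hm⟩
    have huB : u ∉ Bc := by
      rintro ⟨k, hk⟩
      have : pa^[k + 1] c = c := by
        rw [Function.iterate_succ_apply, hpac, hk]
      exact hcr (mpmrf_aux_periodic hpa this)
    have hancu : ∀ k, pa^[k] u ∉ D := hnotB u huB
    have hancne : ∀ j : ↥ne, ∀ k, pa^[k] j.1 ∉ D := by
      rintro ⟨j, hj⟩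
      rcases mpmrf_aux_parent_edge hG hpa hj with h1 | h2
      · refine hnotB j ?_
        rintro ⟨k, hk⟩
        exact huB ⟨k + 1, by rw [Function.iterate_succ_apply, h1, hk]⟩
      · by_cases hjc : j = c
        · intro k
          rw [show (⟨j, hj⟩ : ↥ne).1 = j from rfl, hjc]
          exact hcanc k
        · refine hnotB j ?_
          rintro ⟨k, hk⟩
          match k, hk with
          | 0, hk => exact hjc hk
          | (m + 1), hk =>
            rw [Function.iterate_succ_apply, h2] at hk
            exact huB ⟨m, hk⟩
    have hFAC : ∀ (q : ℕ) (x : V), pa^[q] x = c →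
        ∃ F : ℕ → Ω → ℕ, (∀ m, Measurable[MS D] (F m)) ∧ ∀ ω, N x ω = F (N c ω) ω := by
      intro q
      induction q with
      | zero =>
        intro x hx
        refine ⟨fun m _ => m, fun m => measurable_const, fun ω => ?_⟩
        rw [show x = c from hx]
      | succ q IH =>
        intro x hx
        have hx' : pa^[q] (pa x) = c := by rw [← Function.iterate_succ_apply]; exact hx
        have hxr : x ≠ r := by
          rintro rfl
          rw [mpmrf_aux_iter_root hpa] at hx
          exact hcr hx.symm
        have hxc : x ≠ c := by
          rintro rfl
          exact hcr (mpmrf_aux_periodic hpa hx)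
        have hxD : x ∈ D := ⟨⟨q + 1, hx⟩, hxc⟩
        obtain ⟨F', hF'm, hF'⟩ := IH (pa x) hx'
        refine ⟨fun m ω => L x ω + ∑ i ∈ Finset.range (F' m ω), (if I x i ω then 1 else 0),
          fun m => Measurable.add (hLmem D x hxD) (mpmrf_aux_sum_meas (hF'm m) (hImem D x hxD)),
          fun ω => ?_⟩
        rw [hNrec x hxr ω, hF' ω]
    obtain ⟨F, hFm, hFval⟩ := hFAC n' w hcdef.symm
    have hadjc : G.Adj u c := by
      have := hpa.2.1 c hcr
      rwa [hpac] at this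
    have hZpre : Z ⁻¹' {z} = ⋂ j : ↥ne, N j.1 ⁻¹' {z j} := by
      ext ω
      simp only [Set.mem_preimage, Set.mem_singleton_iff, Set.mem_iInter, funext_iff]
      exact Iff.rfl
    have hZmem : MeasurableSet[MS Dᶜ] (Z ⁻¹' {z}) := by
      rw [hZpre]
      exact MeasurableSet.iInter fun j =>
        hNmem Dᶜ j.1 (fun k => hancne j k) (measurableSet_singleton _)
    have hXmem : MeasurableSet[MS Dᶜ] (N u ⁻¹' s) :=
      hNmem Dᶜ u (fun k => hancu k) trivial
    have hAFmeas : MeasurableSet[MS D] (F (z ⟨c, hadjc⟩) ⁻¹' t) := hFm _ trivial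
    have hNceq : ∀ ω, Z ω = z → N c ω = z ⟨c, hadjc⟩ := by
      intro ω hω
      exact congrFun hω ⟨c, hadjc⟩
    have hYZ : ∀ ω, Z ω = z → (N w ω ∈ t ↔ F (z ⟨c, hadjc⟩) ω ∈ t) := by
      intro ω hω
      rw [hFval ω, hNceq ω hω]
    have e1 : N u ⁻¹' s ∩ N w ⁻¹' t ∩ Z ⁻¹' {z}
        = F (z ⟨c, hadjc⟩) ⁻¹' t ∩ (N u ⁻¹' s ∩ Z ⁻¹' {z}) := by
      ext ω
      simp only [Set.mem_inter_iff, Set.mem_preimage, Set.mem_singleton_iff]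
      constructor
      · rintro ⟨⟨h1, h2⟩, h3⟩
        exact ⟨(hYZ ω h3).mp h2, h1, h3⟩
      · rintro ⟨h1, h2, h3⟩
        exact ⟨⟨h2, (hYZ ω h3).mpr h1⟩, h3⟩
    have e2 : N w ⁻¹' t ∩ Z ⁻¹' {z} = F (z ⟨c, hadjc⟩) ⁻¹' t ∩ Z ⁻¹' {z} := by
      ext ω
      simp only [Set.mem_inter_iff, Set.mem_preimage, Set.mem_singleton_iff]
      constructor
      · rintro ⟨h1, h2⟩; exact ⟨(hYZ ω h2).mp h1, h2⟩
      · rintro ⟨h1, h2⟩; exact ⟨(hYZ ω h2).mpr h1, h2⟩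
    rw [e1, e2,
      hIndepMS D Dᶜ disjoint_compl_right _ _ hAFmeas (hXmem.inter hZmem),
      hIndepMS D Dᶜ disjoint_compl_right _ _ hAFmeas hZmem]
    ring
  · -- CASE B : w is not a descendant of u
    have hur : u ≠ r := by
      rintro rfl
      exact hcase (hpa.2.2 w)
    set S := {x : V | x = u ∨ pa x = u} with hS
    have huS : u ∈ S := Or.inl rfl
    have hancw : ∀ k, pa^[k] w ∉ S := by
      intro k hk
      rcases hk with h1 | h2
      · exact hcase ⟨k, h1⟩
      · exact hcase ⟨k + 1, by rw [Function.iterate_succ_apply']; exact h2⟩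
    have hancp : ∀ k, pa^[k] (pa u) ∉ S := by
      intro k hk
      rcases hk with h1 | h2
      · have : pa^[k + 1] u = u := by rw [Function.iterate_succ_apply]; exact h1
        exact hur (mpmrf_aux_periodic hpa this)
      · have : pa^[k + 2] u = u := by
          have hstep : pa^[k + 2] u = pa (pa^[k] (pa u)) := by
            rw [show k + 2 = (k + 1) + 1 from rfl, Function.iterate_succ_apply' pa (k + 1) u,
              Function.iterate_succ_apply]
          rw [hstep]
          exact h2
        exact hur (mpmrf_aux_periodic hpa this)
    set F : ℕ → Ω → ℕ := fun m ω => L u ω + ∑ i ∈ Finset.range m, (if I u i ω then 1 else 0)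
      with hFdef
    have hFm : ∀ m, Measurable[MS S] (F m) := fun m =>
      Measurable.add (hLmem S u huS)
        (Finset.measurable_sum _ fun i _ => hImem S u huS i)
    have hXF : ∀ ω, N u ω = F (N (pa u) ω) ω := fun ω => hNrec u hur ω
    have hadjp : G.Adj u (pa u) := (hpa.2.1 u hur).symm
    have hGG : ∀ j : ↥ne, ∃ GG : ℕ → Ω → ℕ, (∀ m, Measurable[MS S] (GG m)) ∧
        ∀ ω m, N (pa u) ω = m → N j.1 ω = GG m ω := by
      rintro ⟨j, hj⟩
      by_cases hjp : j = pa u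
      · subst hjp
        exact ⟨fun m _ => m, fun m => measurable_const, fun ω m hm => hm⟩
      · have hpaj : pa j = u := by
          rcases mpmrf_aux_parent_edge hG hpa hj with h1 | h2
          · exact absurd h1.symm hjp
          · exact h2
        have hjr : j ≠ r := by
          rintro rfl
          exact hur (by rw [← hpaj, hpa.1])
        have hjS : j ∈ S := Or.inr hpaj
        refine ⟨fun m ω => L j ω + ∑ i ∈ Finset.range (F m ω), (if I j i ω then 1 else 0),
          fun m => Measurable.add (hLmem S j hjS) (mpmrf_aux_sum_meas (hFm m) (hImem S j hjS)),
          fun ω m hm => ?_⟩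
        rw [hNrec j hjr ω, hpaj, hXF ω, hm]
    choose GG hGGm hGGval using hGG
    set n₀ := z ⟨pa u, hadjp⟩ with hn₀
    set C := ⋂ j : ↥ne, GG j n₀ ⁻¹' {z j} with hCdef
    have hCmeas : MeasurableSet[MS S] C :=
      MeasurableSet.iInter fun j => hGGm j n₀ (measurableSet_singleton _)
    have hFsmeas : MeasurableSet[MS S] (F n₀ ⁻¹' s) := hFm n₀ trivial
    have hNpmem : MeasurableSet[MS Sᶜ] (N (pa u) ⁻¹' {n₀}) :=
      hNmem Sᶜ (pa u) (fun k => hancp k) (measurableSet_singleton _)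
    have hYmem : MeasurableSet[MS Sᶜ] (N w ⁻¹' t) :=
      hNmem Sᶜ w (fun k => hancw k) trivial
    have hZiff : ∀ ω, Z ω = z ↔ (N (pa u) ω = n₀ ∧ ω ∈ C) := by
      intro ω
      constructor
      · intro h
        have hp : N (pa u) ω = n₀ := congrFun h ⟨pa u, hadjp⟩
        refine ⟨hp, Set.mem_iInter.mpr fun j => ?_⟩
        rw [Set.mem_preimage, Set.mem_singleton_iff, ← hGGval j ω n₀ hp]
        exact congrFun h j
      · rintro ⟨hp, hω⟩
        funext j
        have hj := Set.mem_iInter.mp hω j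
        rw [Set.mem_preimage, Set.mem_singleton_iff] at hj
        rw [show Z ω j = N j.1 ω from rfl, hGGval j ω n₀ hp]
        exact hj
    have e1 : N u ⁻¹' s ∩ N w ⁻¹' t ∩ Z ⁻¹' {z}
        = (F n₀ ⁻¹' s ∩ C) ∩ (N (pa u) ⁻¹' {n₀} ∩ N w ⁻¹' t) := by
      ext ω
      simp only [Set.mem_inter_iff, Set.mem_preimage, Set.mem_singleton_iff]
      constructor
      · rintro ⟨⟨h1, h2⟩, h3⟩
        obtain ⟨hp, hc⟩ := (hZiff ω).mp h3
        have hXn : N u ω = F n₀ ω := by rw [hXF ω, hp]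
        exact ⟨⟨by rwa [← hXn], hc⟩, hp, h2⟩
      · rintro ⟨⟨h1, hc⟩, hp, h2⟩
        have hXn : N u ω = F n₀ ω := by rw [hXF ω, hp]
        exact ⟨⟨by rwa [hXn], h2⟩, (hZiff ω).mpr ⟨hp, hc⟩⟩
    have e3 : N u ⁻¹' s ∩ Z ⁻¹' {z} = (F n₀ ⁻¹' s ∩ C) ∩ N (pa u) ⁻¹' {n₀} := by
      ext ω
      simp only [Set.mem_inter_iff, Set.mem_preimage, Set.mem_singleton_iff]
      constructor
      · rintro ⟨h1, h3⟩
        obtain ⟨hp, hc⟩ := (hZiff ω).mp h3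
        have hXn : N u ω = F n₀ ω := by rw [hXF ω, hp]
        exact ⟨⟨by rwa [← hXn], hc⟩, hp⟩
      · rintro ⟨⟨h1, hc⟩, hp⟩
        have hXn : N u ω = F n₀ ω := by rw [hXF ω, hp]
        exact ⟨by rwa [hXn], (hZiff ω).mpr ⟨hp, hc⟩⟩
    have e4 : N w ⁻¹' t ∩ Z ⁻¹' {z} = C ∩ (N (pa u) ⁻¹' {n₀} ∩ N w ⁻¹' t) := by
      ext ω
      simp only [Set.mem_inter_iff, Set.mem_preimage, Set.mem_singleton_iff]
      constructor
      · rintro ⟨h1, h3⟩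
        obtain ⟨hp, hc⟩ := (hZiff ω).mp h3
        exact ⟨hc, hp, h1⟩
      · rintro ⟨hc, hp, h1⟩
        exact ⟨h1, (hZiff ω).mpr ⟨hp, hc⟩⟩
    have e0 : Z ⁻¹' {z} = C ∩ N (pa u) ⁻¹' {n₀} := by
      ext ω
      simp only [Set.mem_inter_iff, Set.mem_preimage, Set.mem_singleton_iff]
      rw [hZiff ω]
      tauto
    rw [e1, e3, e4, e0,
      hIndepMS S Sᶜ disjoint_compl_right _ _ (hFsmeas.inter hCmeas) (hNpmem.inter hYmem),
      hIndepMS S Sᶜ disjoint_compl_right _ _ hCmeas hNpmem,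
      hIndepMS S Sᶜ disjoint_compl_right _ _ (hFsmeas.inter hCmeas) hNpmem,
      hIndepMS S Sᶜ disjoint_compl_right _ _ hCmeas (hNpmem.inter hYmem)]
    ring



/-- the MPMRF vector satisfies the local Markov property of its tree. -/
theorem mpmrf_local_markov
    {V Ω : Type*} [Fintype V] [DecidableEq V] [MeasureSpace Ω]
    [StandardBorelSpace Ω] [IsProbabilityMeasure (ℙ : Measure Ω)]
    (d : ℕ) (hd : Fintype.card V = d)
    (G : SimpleGraph V) (hG : G.IsTree)
    (r : V) (pa : V → V) (hpa : IsParentMap G r pa)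
    (lam : ℝ) (hlam : 0 < lam)
    (α : V → V → ℝ) (hα : ∀ a b, G.Adj a b → α a b ∈ Set.Ioo (0 : ℝ) 1)
    (N : V → Ω → ℕ) (hN : IsMPMRF lam α pa r N)
    (u w : V) (huw : u ≠ w) (hnadj : ¬ G.Adj u w)
    (m' : MeasurableSpace Ω)
    (hm'def : m' = ⨆ j ∈ {j : V | G.Adj u j},
      MeasurableSpace.comap (N j) (inferInstance : MeasurableSpace ℕ))
    (hm' : m' ≤ (MeasureSpace.toMeasurableSpace : MeasurableSpace Ω)) :
    CondIndepFun m' hm' (N u) (N w) (μ := ℙ) := by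
  obtain ⟨hNmeas, hZmeas, hfac⟩ := mpmrf_aux_master G hG r pa hpa lam α N hN u w huw hnadj
  haveI : MeasurableSingletonClass (↥{j : V | G.Adj u j} → ℕ) := by
    refine ⟨fun z => ?_⟩
    have hz : {z} = ⋂ j : ↥{j : V | G.Adj u j},
        (fun g : ↥{j : V | G.Adj u j} → ℕ => g j) ⁻¹' {z j} := by
      ext g
      simp only [Set.mem_singleton_iff, Set.mem_iInter, Set.mem_preimage, funext_iff]
    rw [hz]
    exact MeasurableSet.iInter fun j => measurable_pi_apply j (measurableSet_singleton (z j))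
  have hm'Z : m' = MeasurableSpace.comap
      (fun (ω : Ω) (j : ↥{j : V | G.Adj u j}) => N j.1 ω) inferInstance := by
    rw [hm'def]
    have h1 : MeasurableSpace.comap
        (fun (ω : Ω) (j : ↥{j : V | G.Adj u j}) => N j.1 ω) inferInstance
        = ⨆ j : ↥{j : V | G.Adj u j}, MeasurableSpace.comap (N j.1) inferInstance := by
      have hpi : (inferInstance : MeasurableSpace (↥{j : V | G.Adj u j} → ℕ)) =
          ⨆ j : ↥{j : V | G.Adj u j},
            MeasurableSpace.comap (fun g : ↥{j : V | G.Adj u j} → ℕ => g j) inferInstance := rfl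
      rw [hpi, MeasurableSpace.comap_iSup]
      refine iSup_congr fun j => ?_
      rw [MeasurableSpace.comap_comp]
      rfl
    rw [h1, iSup_subtype]
  exact mpmrf_aux_condIndepFun_of_factor (mΩ := MeasureSpace.toMeasurableSpace) (μ := ℙ)
    hZmeas (hNmeas u) (hNmeas w) m' hm'Z hm' hfac


end
end

section
/- Supermodular ordering of synecdochic pairs implies ordering of contributions to TVaR under Euler's rule: let X=(X_v)_{v∈V} be a finite random vector of ℕ-valued integrable random variables, S=∑_{v∈V}X_v, and u,w∈V. If (X_u,S)⪯_sm(X_w,S), then C^TVaR_κ(X_u;S)≤C^TVaR_κ(X_w;S) for every κ∈[0,1). -/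
open MeasureTheory ProbabilityTheory
open scoped ENNReal Classical

noncomputable section

/-- Value-at-Risk at level `κ` of a real random variable. -/
def VaR {Ω : Type*} [MeasureSpace Ω] (Y : Ω → ℝ) (κ : ℝ) : ℝ :=
  sInf {x : ℝ | κ ≤ ((ℙ : Measure Ω) {ω | Y ω ≤ x}).toReal}

/-- Contribution of `X` to the TVaR of `Y` at level `κ` under Euler's rule. -/
def TVaRContrib {Ω : Type*} [MeasureSpace Ω] (X Y : Ω → ℝ) (κ : ℝ) : ℝ :=
  (1 / (1 - κ)) *
    ((∫ ω, X ω * (if VaR Y κ < Y ω then 1 else 0) ∂ℙ) +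
      ((((ℙ : Measure Ω) {ω | Y ω ≤ VaR Y κ}).toReal - κ) /
          ((ℙ : Measure Ω) {ω | Y ω = VaR Y κ}).toReal) *
        (∫ ω, X ω * (if Y ω = VaR Y κ then 1 else 0) ∂ℙ))

lemma smul_mono_supermodular {g : ℝ → ℝ} (hg : Monotone g) (x y : ℝ × ℝ) :
    x.1 * g x.2 + y.1 * g y.2 ≤ (x ⊓ y).1 * g (x ⊓ y).2 + (x ⊔ y).1 * g (x ⊔ y).2 := by
  obtain ⟨a, s⟩ := x
  obtain ⟨b, t⟩ := y
  have e1 : ((a, s) ⊓ (b, t) : ℝ × ℝ) = (min a b, min s t) := rfl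
  have e2 : ((a, s) ⊔ (b, t) : ℝ × ℝ) = (max a b, max s t) := rfl
  rw [e1, e2]
  simp only
  rcases le_total s t with hst | hst <;> rcases le_total a b with hab | hab
  · rw [min_eq_left hst, min_eq_left hab, max_eq_right hst, max_eq_right hab]
  · rw [min_eq_left hst, min_eq_right hab, max_eq_right hst, max_eq_left hab]
    nlinarith [mul_nonneg (sub_nonneg.2 hab) (sub_nonneg.2 (hg hst))]
  · rw [min_eq_right hst, min_eq_left hab, max_eq_left hst, max_eq_right hab]
    nlinarith [mul_nonneg (sub_nonneg.2 hab) (sub_nonneg.2 (hg hst))]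
  · rw [min_eq_right hst, min_eq_right hab, max_eq_left hst, max_eq_left hab]
    linarith

lemma aux_var_bounds {Ω : Type*} [MeasureSpace Ω] [IsProbabilityMeasure (ℙ : Measure Ω)]
    (S : Ω → ℝ) (hS : Measurable S)
    (hnat : ∀ ω, ∃ n : ℕ, S ω = n) {κ : ℝ} (hκ0 : 0 ≤ κ) (hκ1 : κ < 1) :
    κ ≤ ((ℙ : Measure Ω) {ω | S ω ≤ VaR S κ}).toReal ∧
      ((ℙ : Measure Ω) {ω | S ω < VaR S κ}).toReal ≤ κ := by
  have hS0 : ∀ ω, 0 ≤ S ω := fun ω => by obtain ⟨n, hn⟩ := hnat ω; rw [hn]; positivity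
  set F : ℝ → ℝ := fun x => ((ℙ : Measure Ω) {ω | S ω ≤ x}).toReal with hF
  have hFmono : Monotone F := fun x y hxy =>
    ENNReal.toReal_mono (measure_ne_top _ _) (measure_mono fun ω h => le_trans h hxy)
  set A : Set ℝ := {x | κ ≤ F x} with hA
  have hVaR : VaR S κ = sInf A := rfl
  rcases eq_or_lt_of_le hκ0 with hκ | hκ
  · have hAuniv : A = Set.univ := by
      ext x
      simp only [hA, Set.mem_setOf_eq, Set.mem_univ, iff_true, ← hκ, hF]
      exact ENNReal.toReal_nonneg
    have hq : VaR S κ = 0 := by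
      rw [hVaR, hAuniv, Real.sInf_of_not_bddBelow not_bddBelow_univ]
    constructor
    · rw [← hκ]; exact ENNReal.toReal_nonneg
    · rw [hq, ← hκ]
      have h0 : {ω | S ω < 0} = ∅ := by ext ω; simp [not_lt.2 (hS0 ω)]
      simp [h0]
  · have hlb : ∀ x ∈ A, (0 : ℝ) ≤ x := by
      intro x hx
      by_contra hx0
      push_neg at hx0
      have he : {ω | S ω ≤ x} = ∅ := by
        ext ω
        simp only [Set.mem_setOf_eq, Set.mem_empty_iff_false, iff_false, not_le]
        exact lt_of_lt_of_le hx0 (hS0 ω)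
      have hFx : F x = 0 := by rw [hF]; simp [he]
      rw [hA] at hx
      simp only [Set.mem_setOf_eq, hFx] at hx
      linarith
    have hAne : A.Nonempty := by
      have hmono : Monotone fun n : ℕ => {ω | S ω ≤ (n : ℝ)} := by
        intro m n hmn ω h
        simp only [Set.mem_setOf_eq] at h ⊢
        exact le_trans h (Nat.cast_le.2 hmn)
      have hU : (⋃ n : ℕ, {ω | S ω ≤ (n : ℝ)}) = Set.univ := by
        ext ω
        simp only [Set.mem_iUnion, Set.mem_univ, iff_true, Set.mem_setOf_eq]
        obtain ⟨n, hn⟩ := hnat ω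
        exact ⟨n, le_of_eq hn⟩
      have hsup : (⨆ n : ℕ, (ℙ : Measure Ω) {ω | S ω ≤ (n : ℝ)}) = 1 := by
        rw [← hmono.directed_le.measure_iUnion, hU, measure_univ]
      have hlt : ENNReal.ofReal κ < ⨆ n : ℕ, (ℙ : Measure Ω) {ω | S ω ≤ (n : ℝ)} := by
        rw [hsup]; exact ENNReal.ofReal_lt_one.2 hκ1
      obtain ⟨n, hn⟩ := lt_iSup_iff.1 hlt
      refine ⟨(n : ℝ), ?_⟩
      have h2 := ENNReal.toReal_mono (measure_ne_top _ _) hn.le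
      rw [ENNReal.toReal_ofReal hκ0] at h2
      exact h2
    have hAbdd : BddBelow A := ⟨0, hlb⟩
    have hq0 : 0 ≤ sInf A := le_csInf hAne hlb
    rw [hVaR]
    set q := sInf A with hqdef
    constructor
    · set ε := ((⌊q⌋₊ : ℝ) + 1 - q) / 2 with hε
      have hqlt : q < (⌊q⌋₊ : ℝ) + 1 := Nat.lt_floor_add_one q
      have hε0 : 0 < ε := by rw [hε]; linarith
      obtain ⟨x, hxA, hxlt⟩ := exists_lt_of_csInf_lt hAne (show sInf A < q + ε by
        rw [← hqdef]; linarith)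
      have hset : {ω | S ω ≤ q + ε} = {ω | S ω ≤ q} := by
        ext ω
        obtain ⟨n, hn⟩ := hnat ω
        simp only [Set.mem_setOf_eq, hn]
        constructor
        · intro h
          have h1 : (n : ℝ) < (⌊q⌋₊ : ℝ) + 1 := by rw [hε] at h; linarith
          have h2 : n ≤ ⌊q⌋₊ := by
            have := (by exact_mod_cast h1 : n < ⌊q⌋₊ + 1)
            omega
          calc (n : ℝ) ≤ (⌊q⌋₊ : ℝ) := by exact_mod_cast h2
            _ ≤ q := Nat.floor_le hq0
        · intro h; linarith
      have hk : κ ≤ F (q + ε) := le_trans hxA (hFmono hxlt.le)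
      have hFq : F (q + ε) = F q := by rw [hF]; simp only [hset]
      calc κ ≤ F (q + ε) := hk
        _ = F q := hFq
    · rcases eq_or_lt_of_le hq0 with hqz | hqz
      · have h0 : {ω | S ω < q} = ∅ := by
          ext ω; simp [← hqz, not_lt.2 (hS0 ω)]
        rw [h0]; simpa using hκ0
      · set m := ⌈q⌉₊ - 1 with hm
        have hceil : 1 ≤ ⌈q⌉₊ := Nat.one_le_ceil_iff.2 hqz
        have hmlt : (m : ℝ) < q := by
          have h1 : (⌈q⌉₊ : ℝ) < q + 1 := Nat.ceil_lt_add_one hq0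
          have h2 : (m : ℝ) = (⌈q⌉₊ : ℝ) - 1 := by
            rw [hm]; push_cast [hceil]; ring
          linarith
        have hset : {ω | S ω < q} = {ω | S ω ≤ (m : ℝ)} := by
          ext ω
          obtain ⟨n, hn⟩ := hnat ω
          simp only [Set.mem_setOf_eq, hn]
          constructor
          · intro h
            have h1 : n < ⌈q⌉₊ := by
              exact_mod_cast lt_of_lt_of_le h (Nat.le_ceil q)
            have h2 : n ≤ m := by omega
            exact_mod_cast h2
          · intro h; exact lt_of_le_of_lt h hmlt
        have hnotA : (m : ℝ) ∉ A := fun hmem =>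
          absurd (csInf_le hAbdd hmem) (not_le.2 (by rw [← hqdef]; exact hmlt))
        have hFm : F m < κ := by
          rw [hA] at hnotA
          simpa using not_le.1 hnotA
        rw [hset]
        exact hFm.le

/-- `(X_u, S) ⪯_sm (X_w, S)` implies
`C^TVaR_κ(X_u; S) ≤ C^TVaR_κ(X_w; S)` for every `κ ∈ [0, 1)`. -/
theorem supermodular_pair_implies_tvar_contrib_le
    {V Ω : Type*} [Fintype V] [MeasureSpace Ω] [IsProbabilityMeasure (ℙ : Measure Ω)]
    (X : V → Ω → ℕ)
    (hmeas : ∀ v, Measurable (X v))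
    (hint : ∀ v, Integrable (fun ω => (X v ω : ℝ)) ℙ)
    (u w : V)
    (hsm : SupermodularLE (fun ω => ((X u ω : ℝ), ((∑ v, X v ω : ℕ) : ℝ)))
      (fun ω => ((X w ω : ℝ), ((∑ v, X v ω : ℕ) : ℝ)))) :
    ∀ κ ∈ Set.Ico (0 : ℝ) 1,
      TVaRContrib (fun ω => (X u ω : ℝ)) (fun ω => ((∑ v, X v ω : ℕ) : ℝ)) κ
        ≤ TVaRContrib (fun ω => (X w ω : ℝ)) (fun ω => ((∑ v, X v ω : ℕ) : ℝ)) κ := by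
  intro κ hκ
  obtain ⟨hκ0, hκ1⟩ := hκ
  set S : Ω → ℝ := fun ω => ((∑ v, X v ω : ℕ) : ℝ) with hSdef
  have hSmeas : Measurable S := by
    have h1 : Measurable fun ω => (∑ v, X v ω : ℕ) :=
      Finset.measurable_sum _ fun v _ => hmeas v
    exact measurable_from_top.comp h1
  have hnat : ∀ ω, ∃ n : ℕ, S ω = n := fun ω => ⟨∑ v, X v ω, rfl⟩
  obtain ⟨hvb1, hvb2⟩ := aux_var_bounds S hSmeas hnat hκ0 hκ1
  set q := VaR S κ with hq
  set d := ((ℙ : Measure Ω) {ω | S ω = q}).toReal with hd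
  set c := (((ℙ : Measure Ω) {ω | S ω ≤ q}).toReal - κ) / d with hc
  have hd0 : 0 ≤ d := ENNReal.toReal_nonneg
  have hcb : 0 ≤ c ∧ c ≤ 1 := by
    rcases eq_or_lt_of_le hd0 with h | h
    · rw [hc, ← h, div_zero]
      exact ⟨le_refl 0, zero_le_one⟩
    · have hsplit : ((ℙ : Measure Ω) {ω | S ω ≤ q}).toReal
          = ((ℙ : Measure Ω) {ω | S ω < q}).toReal + d := by
        have hu : {ω | S ω ≤ q} = {ω | S ω < q} ∪ {ω | S ω = q} := by
          ext ω
          simp only [Set.mem_setOf_eq, Set.mem_union]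
          exact le_iff_lt_or_eq
        rw [hd, ← ENNReal.toReal_add (measure_ne_top _ _) (measure_ne_top _ _), hu]
        congr 1
        refine measure_union ?_ (hSmeas (measurableSet_singleton q))
        rw [Set.disjoint_left]
        rintro ω h1 h2
        simp only [Set.mem_setOf_eq] at h1 h2
        exact absurd h2 (ne_of_lt h1)
      constructor
      · exact div_nonneg (by linarith) hd0
      · rw [hc, div_le_one h]
        linarith
  obtain ⟨hc0, hc1⟩ := hcb
  set g : ℝ → ℝ := fun s => (if q < s then 1 else 0) + c * (if s = q then 1 else 0) with hg
  have hgs0 : ∀ x : ℝ, x < q → g x = 0 := by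
    intro x hx
    simp [hg, not_lt.2 hx.le, hx.ne]
  have hgsq : g q = c := by simp [hg]
  have hgs1 : ∀ x : ℝ, q < x → g x = 1 := by
    intro x hx
    simp [hg, hx, hx.ne']
  have hgmono : Monotone g := by
    intro s t hst
    rcases lt_trichotomy s q with hs | hs | hs <;> rcases lt_trichotomy t q with ht | ht | ht
    · rw [hgs0 s hs, hgs0 t ht]
    · rw [hgs0 s hs, ht, hgsq]; exact hc0
    · rw [hgs0 s hs, hgs1 t ht]; exact zero_le_one
    · exact absurd (hs ▸ hst) (not_le.2 ht)
    · rw [hs, ht]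
    · rw [hs, hgsq, hgs1 t ht]; exact hc1
    · exact absurd (lt_of_le_of_lt hst ht) (not_lt.2 hs.le)
    · exact absurd (ht ▸ hst) (not_le.2 hs)
    · rw [hgs1 s hs, hgs1 t ht]
  have hgbd : ∀ s, 0 ≤ g s ∧ g s ≤ 1 := by
    intro s
    simp only [hg]
    constructor <;> split_ifs <;> linarith
  have hζsm : Supermodular (fun p : ℝ × ℝ => p.1 * g p.2) := fun x y =>
    smul_mono_supermodular hgmono x y
  have hind1meas : Measurable fun ω => (if q < S ω then (1 : ℝ) else 0) :=
    Measurable.ite (measurableSet_lt measurable_const hSmeas) measurable_const measurable_const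
  have hind2meas : Measurable fun ω => (if S ω = q then (1 : ℝ) else 0) :=
    Measurable.ite (hSmeas (measurableSet_singleton q)) measurable_const measurable_const
  have hXmeas : ∀ v, Measurable fun ω => (X v ω : ℝ) := fun v =>
    measurable_from_top.comp (hmeas v)
  have hint1 : ∀ v, Integrable (fun ω => (X v ω : ℝ) * (if q < S ω then 1 else 0)) ℙ := by
    intro v
    refine Integrable.mono' (hint v).abs ((hXmeas v).mul hind1meas).aestronglyMeasurable
      (ae_of_all _ fun ω => ?_)
    rw [Real.norm_eq_abs, abs_mul]
    have h1 : |if q < S ω then (1 : ℝ) else 0| ≤ 1 := by split_ifs <;> simp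
    calc |(X v ω : ℝ)| * |if q < S ω then (1 : ℝ) else 0|
        ≤ |(X v ω : ℝ)| * 1 := mul_le_mul_of_nonneg_left h1 (abs_nonneg _)
      _ = |(X v ω : ℝ)| := mul_one _
  have hint2 : ∀ v, Integrable (fun ω => (X v ω : ℝ) * (if S ω = q then 1 else 0)) ℙ := by
    intro v
    refine Integrable.mono' (hint v).abs ((hXmeas v).mul hind2meas).aestronglyMeasurable
      (ae_of_all _ fun ω => ?_)
    rw [Real.norm_eq_abs, abs_mul]
    have h1 : |if S ω = q then (1 : ℝ) else 0| ≤ 1 := by split_ifs <;> simp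
    calc |(X v ω : ℝ)| * |if S ω = q then (1 : ℝ) else 0|
        ≤ |(X v ω : ℝ)| * 1 := mul_le_mul_of_nonneg_left h1 (abs_nonneg _)
      _ = |(X v ω : ℝ)| := mul_one _
  have hgSmeas : Measurable fun ω => g (S ω) := by
    simp only [hg]
    exact hind1meas.add (measurable_const.mul hind2meas)
  have hintg : ∀ v, Integrable (fun ω => (X v ω : ℝ) * g (S ω)) ℙ := by
    intro v
    refine Integrable.mono' (hint v).abs ((hXmeas v).mul hgSmeas).aestronglyMeasurable
      (ae_of_all _ fun ω => ?_)
    rw [Real.norm_eq_abs, abs_mul]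
    have h1 : |g (S ω)| ≤ 1 := by
      rw [abs_le]
      exact ⟨by linarith [(hgbd (S ω)).1], (hgbd (S ω)).2⟩
    calc |(X v ω : ℝ)| * |g (S ω)|
        ≤ |(X v ω : ℝ)| * 1 := mul_le_mul_of_nonneg_left h1 (abs_nonneg _)
      _ = |(X v ω : ℝ)| := mul_one _
  have hrw : ∀ v, (∫ ω, (X v ω : ℝ) * (if q < S ω then 1 else 0) ∂ℙ)
      + c * (∫ ω, (X v ω : ℝ) * (if S ω = q then 1 else 0) ∂ℙ)
      = ∫ ω, (X v ω : ℝ) * g (S ω) ∂ℙ := by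
    intro v
    rw [← integral_const_mul, ← integral_add (hint1 v) ((hint2 v).const_mul c)]
    congr 1
    funext ω
    simp only [hg]
    ring
  have hmain : (∫ ω, (X u ω : ℝ) * g (S ω) ∂ℙ) ≤ ∫ ω, (X w ω : ℝ) * g (S ω) ∂ℙ :=
    hsm (fun p => p.1 * g p.2) hζsm (hintg u) (hintg w)
  have hκpos : 0 ≤ 1 / (1 - κ) := by
    have h1 : 0 < 1 - κ := by linarith
    positivity
  simp only [TVaRContrib]
  rw [← hq, ← hd, ← hc, hrw u, hrw w]
  exact mul_le_mul_of_nonneg_left hmain hκpos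


end
end

section
/- Tail expectation ordering implies TVaR-contribution ordering: let X=(X_i)_{i=1}^d be an integrable random vector with values in ℕ^d and let Y=∑_{i=1}^d X_i. Fix v,w∈{1,…,d}. If E[X_v·1{Y≥k}]≤E[X_w·1{Y≥k}] for every k∈ℕ, then C^TVaR_κ(X_v;Y)≤C^TVaR_κ(X_w;Y) for every κ∈[0,1). -/
open MeasureTheory ProbabilityTheory
open scoped ENNReal Classical

noncomputable section

theorem tvar_aux {Ω : Type*} [MeasureSpace Ω] [IsProbabilityMeasure (ℙ : Measure Ω)]
    (Y : Ω → ℕ) (hY : Measurable Y) (f g : Ω → ℝ)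
    (hf : Integrable f ℙ) (hg : Integrable g ℙ)
    (htail : ∀ k : ℕ,
      ∫ ω, f ω * (if k ≤ Y ω then 1 else 0) ∂ℙ ≤ ∫ ω, g ω * (if k ≤ Y ω then 1 else 0) ∂ℙ)
    (κ : ℝ) (hκ0 : 0 ≤ κ) (hκ1 : κ < 1) :
    TVaRContrib f (fun ω => (Y ω : ℝ)) κ ≤ TVaRContrib g (fun ω => (Y ω : ℝ)) κ := by
  set Yr : Ω → ℝ := fun ω => (Y ω : ℝ) with hYrdef
  have hmle : ∀ n : ℕ, MeasurableSet {ω | Y ω ≤ n} := fun n => hY measurableSet_Iic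
  set F : ℕ → ℝ := fun n => ((ℙ : Measure Ω) {ω | Y ω ≤ n}).toReal with hFdef
  -- existence of a level where the cdf exceeds κ
  have hex : ∃ n, κ ≤ F n := by
    have hmono : Monotone (fun n : ℕ => {ω | Y ω ≤ n}) := fun a b hab ω h => le_trans h hab
    have hU : (⋃ n, {ω | Y ω ≤ n}) = Set.univ := by
      ext ω
      simp only [Set.mem_iUnion, Set.mem_setOf_eq, Set.mem_univ, iff_true]
      exact ⟨Y ω, le_refl _⟩
    have ht := tendsto_measure_iUnion_atTop (μ := (ℙ : Measure Ω)) hmono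
    rw [hU, measure_univ] at ht
    have ht2 : Filter.Tendsto F Filter.atTop (nhds 1) := by
      have := (ENNReal.tendsto_toReal (by norm_num : (1 : ℝ≥0∞) ≠ ⊤)).comp ht
      exact this
    exact (ht2.eventually (eventually_ge_nhds hκ1)).exists
  set n0 := Nat.find hex with hn0def
  have hn0spec : κ ≤ F n0 := Nat.find_spec hex
  have hn0min : ∀ m, m < n0 → F m < κ := fun m hm => lt_of_not_ge (Nat.find_min hex hm)
  clear_value n0
  have hsetle : ∀ n : ℕ, {ω | Yr ω ≤ (n : ℝ)} = {ω | Y ω ≤ n} := by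
    intro n; ext ω; simp [hYrdef, Nat.cast_le]
  -- VaR equals n0
  have hVaR : VaR Yr κ = (n0 : ℝ) := by
    unfold VaR
    rcases eq_or_lt_of_le hκ0 with h0 | hκpos
    · have hS : {x : ℝ | κ ≤ ((ℙ : Measure Ω) {ω | Yr ω ≤ x}).toReal} = Set.univ := by
        ext x; simp [← h0, ENNReal.toReal_nonneg]
      have hn0' : n0 = 0 := by
        by_contra hne
        have hlt := hn0min 0 (Nat.pos_of_ne_zero hne)
        rw [← h0] at hlt
        have : (0:ℝ) ≤ F 0 := ENNReal.toReal_nonneg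
        linarith
      rw [hS, hn0']
      rw [Real.sInf_of_not_bddBelow (not_bddBelow_univ)]
      simp
    · have hS : {x : ℝ | κ ≤ ((ℙ : Measure Ω) {ω | Yr ω ≤ x}).toReal} = Set.Ici (n0 : ℝ) := by
        ext x
        simp only [Set.mem_setOf_eq, Set.mem_Ici]
        constructor
        · intro hx
          by_contra hlt
          push_neg at hlt
          rcases lt_or_ge x 0 with hx0 | hx0
          · have hemp : {ω | Yr ω ≤ x} = ∅ := by
              ext ω
              simp only [Set.mem_setOf_eq, Set.mem_empty_iff_false, iff_false, not_le]
              exact lt_of_lt_of_le hx0 (Nat.cast_nonneg _)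
            rw [hemp] at hx; simp at hx; linarith
          · have hmx : {ω | Yr ω ≤ x} ⊆ {ω | Y ω ≤ ⌊x⌋₊} := fun ω h => Nat.le_floor h
            have hmlt : ⌊x⌋₊ < n0 := by
              have h1 : (⌊x⌋₊ : ℝ) ≤ x := Nat.floor_le hx0
              exact_mod_cast lt_of_le_of_lt h1 hlt
            have hle : ((ℙ : Measure Ω) {ω | Yr ω ≤ x}).toReal ≤ F ⌊x⌋₊ :=
              ENNReal.toReal_mono (measure_ne_top _ _) (measure_mono hmx)
            have := hn0min _ hmlt
            linarith
        · intro hx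
          have hsub : {ω | Y ω ≤ n0} ⊆ {ω | Yr ω ≤ x} := by
            intro ω h
            simp only [Set.mem_setOf_eq] at h ⊢
            have : ((Y ω : ℝ)) ≤ (n0 : ℝ) := by exact_mod_cast h
            exact le_trans this hx
          exact le_trans hn0spec (ENNReal.toReal_mono (measure_ne_top _ _) (measure_mono hsub))
      rw [hS, csInf_Ici]
  -- integrability of truncated products
  have hintk : ∀ (h : Ω → ℝ), Integrable h ℙ → ∀ k : ℕ,
      Integrable (fun ω => h ω * (if k ≤ Y ω then (1 : ℝ) else 0)) ℙ := by
    intro h hh k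
    apply Integrable.mono hh
    · exact (hh.aestronglyMeasurable.mul
        ((Measurable.ite (hY measurableSet_Ici) measurable_const measurable_const).aestronglyMeasurable))
    · filter_upwards with ω
      rw [norm_mul]
      by_cases hc : k ≤ Y ω <;> simp [hc]
  -- rewrite the strict-tail integral
  have hlt_eq : ∀ (h : Ω → ℝ),
      (∫ ω, h ω * (if (n0 : ℝ) < Yr ω then 1 else 0) ∂ℙ)
        = ∫ ω, h ω * (if n0 + 1 ≤ Y ω then 1 else 0) ∂ℙ := by
    intro h
    apply integral_congr_ae
    filter_upwards with ω
    congr 1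
    have : ((n0 : ℝ) < Yr ω) ↔ (n0 + 1 ≤ Y ω) := by
      show ((n0 : ℝ) < (Y ω : ℝ)) ↔ _
      rw [Nat.cast_lt]; constructor <;> intro h <;> omega
    by_cases hc : n0 + 1 ≤ Y ω
    · rw [if_pos hc, if_pos (this.mpr hc)]
    · rw [if_neg hc, if_neg (fun hcontra => hc (this.mp hcontra))]
  -- rewrite the atom integral
  have heq_int : ∀ (h : Ω → ℝ), Integrable h ℙ →
      (∫ ω, h ω * (if Yr ω = (n0 : ℝ) then 1 else 0) ∂ℙ)
        = (∫ ω, h ω * (if n0 ≤ Y ω then 1 else 0) ∂ℙ)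
          - ∫ ω, h ω * (if n0 + 1 ≤ Y ω then 1 else 0) ∂ℙ := by
    intro h hh
    rw [← integral_sub (hintk h hh n0) (hintk h hh (n0 + 1))]
    apply integral_congr_ae
    filter_upwards with ω
    have hiff : (Yr ω = (n0 : ℝ)) ↔ Y ω = n0 := by simp [hYrdef, Nat.cast_inj]
    by_cases hc : Y ω = n0
    · rw [if_pos (hiff.mpr hc), if_pos (by omega), if_neg (by omega)]; ring
    · rw [if_neg (fun hcontra => hc (hiff.mp hcontra))]
      rcases lt_or_gt_of_ne hc with hl | hg
      · rw [if_neg (by omega), if_neg (by omega)]; ring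
      · rw [if_pos (by omega), if_pos (by omega)]; ring
  -- the weight c
  set D : ℝ := ((ℙ : Measure Ω) {ω | Yr ω = (n0 : ℝ)}).toReal with hDdef
  set c : ℝ := (F n0 - κ) / D with hcdef
  have hc0 : 0 ≤ c := div_nonneg (by linarith) ENNReal.toReal_nonneg
  have hc1 : c ≤ 1 := by
    rcases eq_or_lt_of_le (ENNReal.toReal_nonneg : (0 : ℝ) ≤ D) with hD | hD
    · have hD' : D = 0 := hD.symm
      rw [hcdef, hD', div_zero]
      norm_num
    · rw [hcdef, div_le_one hD]
      have hFn0 : F n0 = ((ℙ : Measure Ω) {ω | Y ω ≤ n0}).toReal := by rw [hFdef]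
      rcases Nat.eq_zero_or_pos n0 with h0 | hpos
      · have hsetz : {ω | Y ω ≤ n0} = {ω | Yr ω = ((n0:ℕ) : ℝ)} := by
          ext ω; simp [hYrdef, h0, Nat.le_zero, Nat.cast_inj]
        have hF0 : F n0 = D := by rw [hFn0, hsetz, hDdef]
        linarith
      · obtain ⟨m, hm⟩ : ∃ m, n0 = m + 1 := ⟨n0 - 1, by omega⟩
        have hdisj : Disjoint {ω | Yr ω = ((n0 : ℕ) : ℝ)} {ω | Y ω ≤ m} := by
          rw [Set.disjoint_left]
          intro ω h1 h2
          simp only [Set.mem_setOf_eq, hYrdef, Nat.cast_inj] at h1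
          simp only [Set.mem_setOf_eq] at h2
          omega
        have hsplit : (ℙ : Measure Ω) {ω | Y ω ≤ n0}
            = (ℙ : Measure Ω) {ω | Yr ω = ((n0 : ℕ) : ℝ)} + (ℙ : Measure Ω) {ω | Y ω ≤ m} := by
          rw [← measure_union hdisj (hmle m)]
          congr 1
          ext ω
          simp only [Set.mem_setOf_eq, Set.mem_union, hYrdef, Nat.cast_inj]
          omega
        have hFs : F n0 = D + F m := by
          rw [hFn0, hsplit, ENNReal.toReal_add (measure_ne_top _ _) (measure_ne_top _ _),
            hDdef, hFdef]
        have hFm : F m < κ := hn0min m (by omega)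
        linarith
  -- key representation of the contribution
  have key : ∀ (h : Ω → ℝ), Integrable h ℙ → TVaRContrib h Yr κ
      = (1 / (1 - κ)) *
        ((1 - c) * (∫ ω, h ω * (if n0 + 1 ≤ Y ω then 1 else 0) ∂ℙ)
          + c * ∫ ω, h ω * (if n0 ≤ Y ω then 1 else 0) ∂ℙ) := by
    intro h hh
    unfold TVaRContrib
    rw [hVaR, hsetle n0, hlt_eq h, heq_int h hh]
    have hc_eq : c = (((ℙ : Measure Ω) {ω | Y ω ≤ n0}).toReal - κ)
        / ((ℙ : Measure Ω) {ω | Yr ω = (n0 : ℝ)}).toReal := by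
      rw [hcdef, hDdef, hFdef]
    rw [← hc_eq]
    ring
  rw [key f hf, key g hg]
  have h1 := htail (n0 + 1)
  have h0 := htail n0
  have hκ' : 0 ≤ 1 / (1 - κ) := div_nonneg zero_le_one (by linarith)
  apply mul_le_mul_of_nonneg_left _ hκ'
  nlinarith [mul_le_mul_of_nonneg_left h1 (by linarith : (0:ℝ) ≤ 1 - c),
    mul_le_mul_of_nonneg_left h0 hc0]


/-- if `E[X_v·1{Y ≥ k}] ≤ E[X_w·1{Y ≥ k}]` for every `k ∈ ℕ`, then
`C^TVaR_κ(X_v; Y) ≤ C^TVaR_κ(X_w; Y)` for every `κ ∈ [0, 1)`. -/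
theorem tail_expectation_implies_tvar_contrib_le
    {Ω : Type*} [MeasureSpace Ω] [IsProbabilityMeasure (ℙ : Measure Ω)]
    (d : ℕ) (X : Fin d → Ω → ℕ)
    (hmeas : ∀ i, Measurable (X i))
    (hint : ∀ i, Integrable (fun ω => (X i ω : ℝ)) ℙ)
    (v w : Fin d)
    (htail : ∀ k : ℕ,
      ∫ ω, (X v ω : ℝ) * (if k ≤ (∑ i, X i ω) then 1 else 0) ∂ℙ
        ≤ ∫ ω, (X w ω : ℝ) * (if k ≤ (∑ i, X i ω) then 1 else 0) ∂ℙ) :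
    ∀ κ ∈ Set.Ico (0 : ℝ) 1,
      TVaRContrib (fun ω => (X v ω : ℝ)) (fun ω => ((∑ i, X i ω : ℕ) : ℝ)) κ
        ≤ TVaRContrib (fun ω => (X w ω : ℝ)) (fun ω => ((∑ i, X i ω : ℕ) : ℝ)) κ := by
  intro κ hκ
  exact tvar_aux (fun ω => ∑ i, X i ω) (Finset.measurable_sum _ (fun i _ => hmeas i))
    _ _ (hint v) (hint w) htail κ hκ.1 hκ.2

end
end

section
/- A concrete stochastic dominance between probability generating functions (second step in the star-to-series deconstruction): let α∈(0,1) and let d≥4 be an integer. Let X and Y be ℕ-valued random variables whose probability generating functions satisfy E[t^X]=t·(1−α+α·t·(1−α+α·t·(1−α+α·t)^{d−4})) and E[t^Y]=(1−α+α·t)^{d−4}·t·(1−α+α·t·(1−α+α·t)) for all t∈[0,1]. Then X⪯_st Y. -/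
open MeasureTheory ProbabilityTheory
open scoped ENNReal Classical

noncomputable section

namespace PgfAux

open Finset Set

def pgfC (a b : ℝ) (m j : ℕ) : ℝ := (m.choose j : ℝ) * a ^ j * b ^ (m - j)

lemma pgfC_eq_zero {a b : ℝ} {m j : ℕ} (h : m < j) : pgfC a b m j = 0 := by
  simp [pgfC, Nat.choose_eq_zero_of_lt h]

lemma pgfC_nonneg {a b : ℝ} (ha : 0 ≤ a) (hb : 0 ≤ b) (m j : ℕ) : 0 ≤ pgfC a b m j :=
  mul_nonneg (mul_nonneg (Nat.cast_nonneg _) (pow_nonneg ha _)) (pow_nonneg hb _)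

lemma sum_pgfC_pow (a b : ℝ) (m : ℕ) (t : ℝ) :
    ∑ j ∈ range (m + 1), pgfC a b m j * t ^ j = (b + a * t) ^ m := by
  rw [add_comm b (a*t), add_pow]
  refine Finset.sum_congr rfl fun j hj => ?_
  simp only [pgfC]; ring

lemma sum_pgfC_pow' (a b : ℝ) (m K : ℕ) (hK : m + 1 ≤ K) (t : ℝ) :
    ∑ j ∈ range K, pgfC a b m j * t ^ j = (b + a * t) ^ m := by
  rw [← sum_pgfC_pow a b m t]
  refine (Finset.sum_subset (Finset.range_subset_range.mpr hK) fun j _ hj => ?_).symm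
  rw [Finset.mem_range, not_lt] at hj
  rw [pgfC_eq_zero (by omega), zero_mul]

def pcoef (a b : ℝ) (m : ℕ) : ℕ → ℝ
  | 0 => 0
  | 1 => b
  | 2 => a * b
  | (n+3) => a ^ 2 * pgfC a b m n

def qcoef (a b : ℝ) (m : ℕ) : ℕ → ℝ
  | 0 => 0
  | 1 => b * pgfC a b m 0
  | 2 => b * pgfC a b m 1 + a * b * pgfC a b m 0
  | (n+3) => b * pgfC a b m (n+2) + a * b * pgfC a b m (n+1) + a ^ 2 * pgfC a b m n

lemma pcoef_nonneg {a b : ℝ} (ha : 0 ≤ a) (hb : 0 ≤ b) (m n : ℕ) : 0 ≤ pcoef a b m n := by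
  match n with
  | 0 => simp [pcoef]
  | 1 => simpa [pcoef] using hb
  | 2 => exact mul_nonneg ha hb
  | (n+3) => exact mul_nonneg (pow_nonneg ha 2) (pgfC_nonneg ha hb m n)

lemma qcoef_nonneg {a b : ℝ} (ha : 0 ≤ a) (hb : 0 ≤ b) (m n : ℕ) : 0 ≤ qcoef a b m n := by
  have h := pgfC_nonneg ha hb m
  match n with
  | 0 => simp [qcoef]
  | 1 => exact mul_nonneg hb (h 0)
  | 2 => exact add_nonneg (mul_nonneg hb (h 1)) (mul_nonneg (mul_nonneg ha hb) (h 0))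
  | (n+3) =>
    rw [qcoef]
    exact add_nonneg (add_nonneg (mul_nonneg hb (h _)) (mul_nonneg (mul_nonneg ha hb) (h _)))
      (mul_nonneg (pow_nonneg ha 2) (h n))

lemma pcoef_eq_zero {a b : ℝ} {m n : ℕ} (h : m + 4 ≤ n) : pcoef a b m n = 0 := by
  match n with
  | (n+3) => rw [pcoef, pgfC_eq_zero (by omega), mul_zero]

lemma qcoef_eq_zero {a b : ℝ} {m n : ℕ} (h : m + 4 ≤ n) : qcoef a b m n = 0 := by
  match n with
  | (n+3) =>
    rw [qcoef, pgfC_eq_zero (show m < n+2 by omega), pgfC_eq_zero (show m < n+1 by omega),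
      pgfC_eq_zero (show m < n by omega)]
    ring

lemma sum_pcoef (a b : ℝ) (m : ℕ) (t : ℝ) :
    ∑ n ∈ range (m + 4), pcoef a b m n * t ^ n
      = t * (b + a * t * (b + a * t * (b + a * t) ^ m)) := by
  have h3 : ∀ f : ℕ → ℝ, ∑ n ∈ range (m + 4), f n
      = (∑ n ∈ range (m + 1), f (n + 3)) + f 2 + f 1 + f 0 := by
    intro f
    rw [show m + 4 = (m+3) + 1 from rfl, Finset.sum_range_succ']
    rw [show m + 3 = (m+2) + 1 from rfl, Finset.sum_range_succ']
    rw [show m + 2 = (m+1) + 1 from rfl, Finset.sum_range_succ']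
  rw [h3]
  have : ∑ n ∈ range (m + 1), pcoef a b m (n+3) * t ^ (n+3)
      = a^2 * t^3 * ∑ n ∈ range (m+1), pgfC a b m n * t ^ n := by
    rw [Finset.mul_sum]
    refine Finset.sum_congr rfl fun n _ => ?_
    rw [pcoef]; ring
  rw [this, sum_pgfC_pow]
  show _ + a*b*t^2 + b*t^1 + 0*t^0 = _
  ring

lemma sum_qcoef (a b : ℝ) (m : ℕ) (t : ℝ) :
    ∑ n ∈ range (m + 4), qcoef a b m n * t ^ n
      = (b + a * t) ^ m * (t * (b + a * t * (b + a * t))) := by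
  have h3 : ∀ f : ℕ → ℝ, ∑ n ∈ range (m + 4), f n
      = (∑ n ∈ range (m + 1), f (n + 3)) + f 2 + f 1 + f 0 := by
    intro f
    rw [show m + 4 = (m+3) + 1 from rfl, Finset.sum_range_succ']
    rw [show m + 3 = (m+2) + 1 from rfl, Finset.sum_range_succ']
    rw [show m + 2 = (m+1) + 1 from rfl, Finset.sum_range_succ']
  rw [h3]
  set P := (b + a * t) ^ m with hP
  have e1 : ∑ n ∈ range (m + 1), pgfC a b m (n+1) * t ^ (n+1)
      = P - pgfC a b m 0 := by
    have := sum_pgfC_pow' a b m (m+2) (by omega) t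
    rw [show m + 2 = (m+1)+1 from rfl, Finset.sum_range_succ'] at this
    simp only [pow_zero, mul_one] at this
    linarith [this]
  have e2 : ∑ n ∈ range (m + 1), pgfC a b m (n+2) * t ^ (n+2)
      = P - pgfC a b m 0 - pgfC a b m 1 * t := by
    have := sum_pgfC_pow' a b m (m+3) (by omega) t
    rw [show m + 3 = (m+2)+1 from rfl, Finset.sum_range_succ'] at this
    rw [show m + 2 = (m+1)+1 from rfl, Finset.sum_range_succ'] at this
    simp only [pow_zero, mul_one, pow_one, zero_add,
      show ∀ k:ℕ, k+1+1 = k+2 from fun k => rfl] at this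
    linarith [this]
  have e0 : ∑ n ∈ range (m + 1), pgfC a b m n * t ^ n = P := sum_pgfC_pow a b m t
  have split : ∑ n ∈ range (m + 1), qcoef a b m (n+3) * t ^ (n+3)
      = b * t * (∑ n ∈ range (m + 1), pgfC a b m (n+2) * t ^ (n+2))
        + a * b * t^2 * (∑ n ∈ range (m + 1), pgfC a b m (n+1) * t ^ (n+1))
        + a^2 * t^3 * (∑ n ∈ range (m + 1), pgfC a b m n * t ^ n) := by
    rw [Finset.mul_sum, Finset.mul_sum, Finset.mul_sum, ← Finset.sum_add_distrib,
      ← Finset.sum_add_distrib]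
    refine Finset.sum_congr rfl fun n _ => ?_
    rw [qcoef]; ring
  rw [split, e1, e2, e0]
  show _ + (b * pgfC a b m 1 + a*b*pgfC a b m 0) * t^2 + (b * pgfC a b m 0) * t^1 + 0 * t^0 = _
  ring


def Scum (a b : ℝ) (m K : ℕ) : ℝ := ∑ j ∈ range K, pgfC a b m j

lemma Scum_nonneg {a b : ℝ} (ha : 0 ≤ a) (hb : 0 ≤ b) (m K : ℕ) : 0 ≤ Scum a b m K :=
  Finset.sum_nonneg fun j _ => pgfC_nonneg ha hb m j

lemma Scum_le_one {a b : ℝ} (ha : 0 ≤ a) (hb : 0 ≤ b) (hab : a + b = 1) (m K : ℕ) :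
    Scum a b m K ≤ 1 := by
  have h1 : Scum a b m K ≤ Scum a b m (max K (m+1)) := by
    refine Finset.sum_le_sum_of_subset_of_nonneg (Finset.range_subset_range.mpr (le_max_left _ _))
      fun j _ _ => pgfC_nonneg ha hb m j
  have h2 : Scum a b m (max K (m+1)) = 1 := by
    have := sum_pgfC_pow' a b m (max K (m+1)) (le_max_right _ _) 1
    simp only [mul_one, pow_one] at this
    rw [Scum]
    calc ∑ j ∈ range (max K (m+1)), pgfC a b m j
        = ∑ j ∈ range (max K (m+1)), pgfC a b m j * 1 ^ j := by simp
      _ = (b + a) ^ m := this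
      _ = 1 := by rw [add_comm, hab, one_pow]
  linarith
  
lemma sum_range_pcoef (a b : ℝ) (m K : ℕ) :
    ∑ n ∈ range K, pcoef a b m n
      = (if 2 ≤ K then b else 0) + (if 3 ≤ K then a * b else 0) + a^2 * Scum a b m (K - 3) := by
  induction K with
  | zero => simp [Scum]
  | succ K ih =>
    rw [Finset.sum_range_succ, ih]
    match K with
    | 0 => simp [pcoef, Scum]
    | 1 => simp [pcoef, Scum]
    | 2 => simp [pcoef, Scum]
    | (n+3) =>
      have h1 : (2:ℕ) ≤ n + 3 := by omega
      have h2 : (3:ℕ) ≤ n + 3 := by omega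
      have h1' : (2:ℕ) ≤ n + 3 + 1 := by omega
      have h2' : (3:ℕ) ≤ n + 3 + 1 := by omega
      rw [if_pos h1, if_pos h2, if_pos h1', if_pos h2']
      have hs : Scum a b m (n+3+1-3) = Scum a b m (n+3-3) + pgfC a b m n := by
        rw [show n+3+1-3 = n+1 by omega, show n+3-3 = n by omega, Scum, Scum,
          Finset.sum_range_succ]
      rw [hs, pcoef]
      ring

lemma sum_range_qcoef (a b : ℝ) (m K : ℕ) :
    ∑ n ∈ range K, qcoef a b m n
      = b * Scum a b m (K - 1) + a * b * Scum a b m (K - 2) + a^2 * Scum a b m (K - 3) := by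
  induction K with
  | zero => simp [Scum]
  | succ K ih =>
    rw [Finset.sum_range_succ, ih]
    match K with
    | 0 => simp [qcoef, Scum, Finset.sum_range_succ]
    | 1 => simp [qcoef, Scum, Finset.sum_range_succ]; try ring
    | 2 => simp [qcoef, Scum, Finset.sum_range_succ]; try ring
    | (n+3) =>
      have e1 : (n+3+1) - 1 = (n+2) + 1 := by omega
      have e2 : (n+3+1) - 2 = (n+1) + 1 := by omega
      have e3 : (n+3+1) - 3 = n + 1 := by omega
      have f1 : (n+3) - 1 = n+2 := by omega
      have f2 : (n+3) - 2 = n+1 := by omega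
      have f3 : (n+3) - 3 = n := by omega
      rw [e1, e2, e3, f1, f2, f3]
      simp only [Scum, Finset.sum_range_succ]
      rw [qcoef]
      ring

lemma key_ineq {a b : ℝ} (ha : 0 ≤ a) (hb : 0 ≤ b) (hab : a + b = 1) (m K : ℕ) :
    ∑ n ∈ range K, qcoef a b m n ≤ ∑ n ∈ range K, pcoef a b m n := by
  rw [sum_range_pcoef, sum_range_qcoef]
  have hSn := Scum_nonneg ha hb m
  have hS1 := Scum_le_one ha hb hab m
  gcongr ?_ + ?_ + _
  · rcases le_or_gt 2 K with h | h
    · rw [if_pos h]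
      calc b * Scum a b m (K-1) ≤ b * 1 := by
            exact mul_le_mul_of_nonneg_left (hS1 _) hb
        _ = b := mul_one b
    · rw [if_neg (by omega)]
      interval_cases K
      · simp [Scum]
      · simp [Scum]
  · rcases le_or_gt 3 K with h | h
    · rw [if_pos h]
      calc a * b * Scum a b m (K-2) ≤ a * b * 1 :=
            mul_le_mul_of_nonneg_left (hS1 _) (mul_nonneg ha hb)
        _ = a * b := mul_one _
    · rw [if_neg (by omega)]
      interval_cases K <;> simp [Scum]


lemma summable_coeff_pow {a : ℕ → ℝ} (ha : ∀ i, 0 ≤ a i) (hs : Summable a)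
    {t : ℝ} (ht0 : 0 ≤ t) (ht1 : t ≤ 1) : Summable fun i => a i * t ^ i := by
  refine Summable.of_nonneg_of_le (fun i => mul_nonneg (ha i) (pow_nonneg ht0 i))
    (fun i => ?_) hs
  calc a i * t ^ i ≤ a i * 1 := by
        exact mul_le_mul_of_nonneg_left (pow_le_one₀ ht0 ht1) (ha i)
    _ = a i := mul_one _

lemma tsum_coeff_shift {a : ℕ → ℝ} (ha : ∀ i, 0 ≤ a i) (hs : Summable a)
    {t : ℝ} (ht0 : 0 ≤ t) (ht1 : t ≤ 1) :
    ∑' i, a i * t ^ i = a 0 + t * ∑' i, a (i + 1) * t ^ i := by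
  rw [Summable.tsum_eq_zero_add (summable_coeff_pow ha hs ht0 ht1)]
  simp only [pow_zero, mul_one, pow_succ]
  rw [← tsum_mul_left]
  congr 1
  exact tsum_congr fun i => by ring

lemma coeff_unique : ∀ (n : ℕ) (a b : ℕ → ℝ), (∀ i, 0 ≤ a i) → (∀ i, 0 ≤ b i) →
    Summable a → Summable b →
    (∀ t ∈ Set.Ioo (0:ℝ) 1, ∑' i, a i * t ^ i = ∑' i, b i * t ^ i) → a n = b n := by
  have base : ∀ (a b : ℕ → ℝ), (∀ i, 0 ≤ a i) → (∀ i, 0 ≤ b i) →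
      Summable a → Summable b →
      (∀ t ∈ Set.Ioo (0:ℝ) 1, ∑' i, a i * t ^ i = ∑' i, b i * t ^ i) → a 0 ≤ b 0 := by
    intro a b ha hb hsa hsb h
    refine le_of_forall_pos_le_add fun ε hε => ?_
    set B := ∑' i, b (i + 1) with hB
    have hsb' : Summable fun i => b (i + 1) := (summable_nat_add_iff 1).mpr hsb
    have hB0 : 0 ≤ B := tsum_nonneg fun i => hb _
    set t : ℝ := min (1/2) (ε / (B + 1)) with htdef
    have ht0 : 0 < t := lt_min (by norm_num) (div_pos hε (by linarith))
    have ht1 : t < 1 := lt_of_le_of_lt (min_le_left _ _) (by norm_num)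
    have h1 := tsum_coeff_shift ha hsa ht0.le ht1.le
    have h2 := tsum_coeff_shift hb hsb ht0.le ht1.le
    have heq := h t ⟨ht0, ht1⟩
    rw [h1, h2] at heq
    have ha' : 0 ≤ t * ∑' i, a (i + 1) * t ^ i :=
      mul_nonneg ht0.le (tsum_nonneg fun i => mul_nonneg (ha _) (pow_nonneg ht0.le _))
    have hb' : t * ∑' i, b (i + 1) * t ^ i ≤ ε := by
      have hle : ∑' i, b (i + 1) * t ^ i ≤ B := by
        refine Summable.tsum_le_tsum (fun i => ?_) (summable_coeff_pow (fun i => hb _) hsb' ht0.le ht1.le) hsb'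
        calc b (i+1) * t ^ i ≤ b (i+1) * 1 :=
              mul_le_mul_of_nonneg_left (pow_le_one₀ ht0.le ht1.le) (hb _)
          _ = b (i+1) := mul_one _
      calc t * ∑' i, b (i + 1) * t ^ i ≤ t * B :=
            mul_le_mul_of_nonneg_left hle ht0.le
        _ ≤ (ε / (B + 1)) * B := by
            exact mul_le_mul_of_nonneg_right (min_le_right _ _) hB0
        _ ≤ ε := by
            rw [div_mul_eq_mul_div, div_le_iff₀ (by linarith)]
            nlinarith
    linarith
  intro n
  induction n with
  | zero => exact fun a b ha hb hsa hsb h =>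
      le_antisymm (base a b ha hb hsa hsb h) (base b a hb ha hsb hsa fun t ht => (h t ht).symm)
  | succ n ih =>
    intro a b ha hb hsa hsb h
    have h0 : a 0 = b 0 :=
      le_antisymm (base a b ha hb hsa hsb h) (base b a hb ha hsb hsa fun t ht => (h t ht).symm)
    refine ih (fun i => a (i+1)) (fun i => b (i+1)) (fun i => ha _) (fun i => hb _)
      ((summable_nat_add_iff 1).mpr hsa) ((summable_nat_add_iff 1).mpr hsb)
      fun t ht => ?_
    have heq := h t ht
    rw [tsum_coeff_shift ha hsa ht.1.le ht.2.le, tsum_coeff_shift hb hsb ht.1.le ht.2.le, h0] at heq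
    exact mul_left_cancel₀ (ne_of_gt ht.1) (by linarith)


lemma pgf_to_coeffs {Ω : Type*} [MeasureSpace Ω] [IsProbabilityMeasure (volume : Measure Ω)]
    (X : Ω → ℕ) (g : ℝ → ℝ)
    (hg : ∀ t ∈ Set.Ioo (0:ℝ) 1, ∫ ω, t ^ X ω ∂ℙ = g t)
    (hgpos : ∀ t ∈ Set.Ioo (0:ℝ) 1, 0 < g t) :
    AEMeasurable X ℙ ∧ ∀ t ∈ Set.Ioo (0:ℝ) 1,
      ∑' n, ((Measure.map X (volume : Measure Ω)) {n}).toReal * t ^ n = g t := by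
  have hint : ∀ t ∈ Set.Ioo (0:ℝ) 1, Integrable (fun ω => t ^ X ω) ℙ := by
    intro t ht
    by_contra hni
    have := integral_undef hni
    rw [hg t ht] at this
    exact absurd this (ne_of_gt (hgpos t ht))
  have hmeas : AEMeasurable X ℙ := by
    have hf : AEMeasurable (fun ω => (2⁻¹:ℝ) ^ X ω) ℙ :=
      (hint 2⁻¹ ⟨by norm_num, by norm_num⟩).aemeasurable
    have hF : Measurable fun x : ℝ => (⌊Real.log x / Real.log 2⁻¹⌋).toNat :=
      (Measurable.of_discrete (f := Int.toNat)).comp ((Real.measurable_log.div_const (Real.log 2⁻¹)).floor)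
    have hXeq : X = (fun x : ℝ => (⌊Real.log x / Real.log 2⁻¹⌋).toNat) ∘
        (fun ω => (2⁻¹:ℝ) ^ X ω) := by
      funext ω
      have hlog : Real.log ((2⁻¹:ℝ) ^ X ω) = (X ω : ℝ) * Real.log 2⁻¹ := Real.log_pow _ _
      have hne : Real.log (2⁻¹:ℝ) ≠ 0 := by
        rw [Real.log_inv, neg_ne_zero]
        have : (0:ℝ) < Real.log 2 := Real.log_pos (by norm_num)
        linarith
      simp only [Function.comp_apply, hlog, mul_div_assoc, div_self hne, mul_one,
        Int.floor_natCast, Int.toNat_natCast]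
    rw [hXeq]
    exact hF.comp_aemeasurable hf
  refine ⟨hmeas, fun t ht => ?_⟩
  have hsm : AEStronglyMeasurable (fun n : ℕ => t ^ n) (Measure.map X (volume : Measure Ω)) :=
    (measurable_from_nat (f := fun n : ℕ => t ^ n)).aestronglyMeasurable
  have hint' : Integrable (fun n : ℕ => t ^ n) (Measure.map X (volume : Measure Ω)) :=
    (integrable_map_measure hsm hmeas).mpr (hint t ht)
  have h1 : ∫ ω, t ^ X ω ∂ℙ = ∫ n, t ^ n ∂(Measure.map X (volume : Measure Ω)) :=
    (integral_map hmeas hsm).symm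
  rw [← hg t ht, h1, integral_countable' hint']
  exact tsum_congr fun n => (smul_eq_mul _ _).symm


lemma tail_repr {Ω : Type*} [MeasureSpace Ω] [IsProbabilityMeasure (ℙ : Measure Ω)]
    (X : Ω → ℕ) (hm : AEMeasurable X ℙ) (k : ℕ) :
    (ℙ : Measure Ω) {ω | k < X ω}
      = 1 - ∑ n ∈ Finset.range (k+1), (Measure.map X (ℙ : Measure Ω)) {n} := by
  set μ := Measure.map X (ℙ : Measure Ω) with hμ
  have hprob : IsProbabilityMeasure μ := Measure.isProbabilityMeasure_map hm
  have h1 : {ω | k < X ω} = X ⁻¹' {n | k < n} := rfl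
  rw [h1, show (ℙ : Measure Ω) (X ⁻¹' {n | k < n}) = μ {n | k < n} from
    (Measure.map_apply_of_aemeasurable hm MeasurableSet.of_discrete).symm]
  have h2 : {n : ℕ | k < n} = {n : ℕ | n ≤ k}ᶜ := by ext n; simp [not_le]
  have h3 : {n : ℕ | n ≤ k} = ⋃ n ∈ Finset.range (k+1), ({n} : Set ℕ) := by
    ext n; simp [Nat.lt_succ_iff]
  have h4 : μ {n : ℕ | n ≤ k} = ∑ n ∈ Finset.range (k+1), μ {n} := by
    rw [h3, measure_biUnion_finset ?_ fun n _ => MeasurableSet.of_discrete]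
    intro i _ j _ hij
    exact Set.disjoint_singleton.mpr hij
  rw [h2, measure_compl MeasurableSet.of_discrete (measure_ne_top _ _), measure_univ, h4]


lemma map_summable_toReal {Ω : Type*} [MeasureSpace Ω] [IsProbabilityMeasure (ℙ : Measure Ω)]
    (X : Ω → ℕ) (hm : AEMeasurable X ℙ) :
    Summable (fun n => ((Measure.map X (volume : Measure Ω)) {n}).toReal) := by
  set μ := Measure.map X (volume : Measure Ω) with hμ
  have hprob : IsProbabilityMeasure μ := Measure.isProbabilityMeasure_map hm
  have h : ∑' n : ℕ, μ {n} = μ univ := by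
    rw [← Set.iUnion_of_singleton ℕ,
      measure_iUnion (fun i j hij => by
        simpa [Function.onFun] using Set.disjoint_singleton.mpr hij)
        (fun n => MeasurableSet.of_discrete)]
  exact ENNReal.summable_toReal (by rw [h, measure_univ]; exact ENNReal.one_ne_top)


end PgfAux

open PgfAux

/-- a concrete stochastic dominance between pgf's (second step in the
star-to-series deconstruction). -/
theorem pgf_dominance_star_to_series_second_step
    {Ω Ω' : Type*}
    [MeasureSpace Ω] [IsProbabilityMeasure (ℙ : Measure Ω)]
    [MeasureSpace Ω'] [IsProbabilityMeasure (ℙ : Measure Ω')]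
    (α : ℝ) (hα : α ∈ Set.Ioo (0 : ℝ) 1)
    (d : ℕ) (hd : 4 ≤ d)
    (X : Ω → ℕ) (Y : Ω' → ℕ)
    (hX : ∀ t ∈ Set.Icc (0 : ℝ) 1,
      ∫ ω, t ^ X ω ∂ℙ = t * (1 - α + α * t * (1 - α + α * t * (1 - α + α * t) ^ (d - 4))))
    (hY : ∀ t ∈ Set.Icc (0 : ℝ) 1,
      ∫ ω, t ^ Y ω ∂ℙ = (1 - α + α * t) ^ (d - 4) * (t * (1 - α + α * t * (1 - α + α * t)))) :
    StochLE X Y := by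
  obtain ⟨ha0, ha1⟩ := hα
  have hb0 : (0:ℝ) < 1 - α := by linarith
  have hab : α + (1 - α) = 1 := by ring
  set m := d - 4 with hmdef
  -- positivity of both pgf's on (0,1)
  have hgXpos : ∀ t ∈ Set.Ioo (0:ℝ) 1,
      0 < t * (1 - α + α * t * (1 - α + α * t * (1 - α + α * t) ^ m)) := by
    intro t ht
    obtain ⟨ht0, _⟩ := ht
    have h0 : 0 < 1 - α + α * t := by nlinarith
    have h1 : 0 < (1 - α + α * t) ^ m := pow_pos h0 _
    have h2 : 0 < 1 - α + α * t * (1 - α + α * t) ^ m :=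
      add_pos hb0 (mul_pos (mul_pos ha0 ht0) h1)
    exact mul_pos ht0 (add_pos hb0 (mul_pos (mul_pos ha0 ht0) h2))
  have hgYpos : ∀ t ∈ Set.Ioo (0:ℝ) 1,
      0 < (1 - α + α * t) ^ m * (t * (1 - α + α * t * (1 - α + α * t))) := by
    intro t ht
    obtain ⟨ht0, _⟩ := ht
    have h0 : 0 < 1 - α + α * t := by nlinarith
    exact mul_pos (pow_pos h0 _)
      (mul_pos ht0 (add_pos hb0 (mul_pos (mul_pos ha0 ht0) h0)))
  obtain ⟨hmX, htX⟩ := pgf_to_coeffs X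
    (fun t => t * (1 - α + α * t * (1 - α + α * t * (1 - α + α * t) ^ m)))
    (fun t ht => hX t ⟨ht.1.le, ht.2.le⟩) hgXpos
  obtain ⟨hmY, htY⟩ := pgf_to_coeffs Y
    (fun t => (1 - α + α * t) ^ m * (t * (1 - α + α * t * (1 - α + α * t))))
    (fun t ht => hY t ⟨ht.1.le, ht.2.le⟩) hgYpos
  set p : ℕ → ℝ := fun n => ((Measure.map X (volume : Measure Ω)) {n}).toReal with hpdef
  set q : ℕ → ℝ := fun n => ((Measure.map Y (volume : Measure Ω')) {n}).toReal with hqdef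
  have hsp : Summable p := map_summable_toReal X hmX
  have hsq : Summable q := map_summable_toReal Y hmY
  have hspc : Summable (pcoef α (1-α) m) :=
    summable_of_ne_finset_zero (s := Finset.range (m+4))
      (fun n hn => pcoef_eq_zero (by simp only [Finset.mem_range, not_lt] at hn; omega))
  have hsqc : Summable (qcoef α (1-α) m) :=
    summable_of_ne_finset_zero (s := Finset.range (m+4))
      (fun n hn => qcoef_eq_zero (by simp only [Finset.mem_range, not_lt] at hn; omega))
  have htpc : ∀ t : ℝ, ∑' n, pcoef α (1-α) m n * t ^ n
      = t * (1 - α + α * t * (1 - α + α * t * (1 - α + α * t) ^ m)) := by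
    intro t
    rw [tsum_eq_sum (s := Finset.range (m+4))
      (fun n hn => by rw [pcoef_eq_zero (by simp only [Finset.mem_range, not_lt] at hn; omega), zero_mul])]
    exact sum_pcoef α (1-α) m t
  have htqc : ∀ t : ℝ, ∑' n, qcoef α (1-α) m n * t ^ n
      = (1 - α + α * t) ^ m * (t * (1 - α + α * t * (1 - α + α * t))) := by
    intro t
    rw [tsum_eq_sum (s := Finset.range (m+4))
      (fun n hn => by rw [qcoef_eq_zero (by simp only [Finset.mem_range, not_lt] at hn; omega), zero_mul])]
    exact sum_qcoef α (1-α) m t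
  have hpc : ∀ n, p n = pcoef α (1-α) m n := by
    intro n
    refine coeff_unique n p _ (fun i => ENNReal.toReal_nonneg)
      (fun i => pcoef_nonneg ha0.le hb0.le m i) hsp hspc fun t ht => ?_
    rw [htX t ht, htpc t]
  have hqc : ∀ n, q n = qcoef α (1-α) m n := by
    intro n
    refine coeff_unique n q _ (fun i => ENNReal.toReal_nonneg)
      (fun i => qcoef_nonneg ha0.le hb0.le m i) hsq hsqc fun t ht => ?_
    rw [htY t ht, htqc t]
  intro k
  rw [tail_repr X hmX k, tail_repr Y hmY k]
  apply tsub_le_tsub_left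
  have hXne : ∀ n ∈ Finset.range (k+1), (Measure.map X (volume : Measure Ω)) {n} ≠ ∞ :=
    fun n _ => measure_ne_top _ _
  have hYne : ∀ n ∈ Finset.range (k+1), (Measure.map Y (volume : Measure Ω')) {n} ≠ ∞ :=
    fun n _ => measure_ne_top _ _
  rw [← ENNReal.toReal_le_toReal (ENNReal.sum_ne_top.mpr hYne) (ENNReal.sum_ne_top.mpr hXne),
    ENNReal.toReal_sum hYne, ENNReal.toReal_sum hXne]
  calc ∑ n ∈ Finset.range (k+1), q n
      = ∑ n ∈ Finset.range (k+1), qcoef α (1-α) m n := Finset.sum_congr rfl fun n _ => hqc n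
    _ ≤ ∑ n ∈ Finset.range (k+1), pcoef α (1-α) m n := key_ineq ha0.le hb0.le hab m (k+1)
    _ = ∑ n ∈ Finset.range (k+1), p n := (Finset.sum_congr rfl fun n _ => hpc n).symm


end
end

section
/- General pgf-composition stochastic dominance: let α∈(0,1) and k≥1. Define ψ(y,t)=t·(1−α+α·y) and let ψ^{k}(y,t) denote the k-fold composition of ψ in its first argument (ψ^{1}(y,t)=ψ(y,t) and ψ^{k}(y,t)=ψ(ψ^{k−1}(y,t),t)). Let Z be an ℕ-valued random variable with probability generating function P_Z(t)=E[t^Z]. If X and Y are ℕ-valued random variables with E[t^X]=ψ^{k}(t·P_Z(t),t) and E[t^Y]=ψ^{k}(t,t)·P_Z(t) for all t∈[0,1], then X⪯_st Y. -/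
open MeasureTheory ProbabilityTheory
open scoped ENNReal Classical

noncomputable section

/-- `psiIter α k y t` is the `k`-fold composition (in the first argument `y`) of
`ψ(y, t) = t · (1 - α + α · y)`. -/
def psiIter (α : ℝ) : ℕ → ℝ → ℝ → ℝ
  | 0, y, _ => y
  | k + 1, y, t => t * (1 - α + α * psiIter α k y t)

set_option maxHeartbeats 1600000

namespace PGFAux

def AkFun (α : ℝ) : ℕ → ℝ → ℝ
  | 0, _ => 0
  | k + 1, t => t * (1 - α) + t * α * AkFun α k t

lemma psiIter_eq_affine (α : ℝ) (k : ℕ) (y t : ℝ) :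
    psiIter α k y t = AkFun α k t + (α * t) ^ k * y := by
  induction k generalizing y with
  | zero => simp [psiIter, AkFun]
  | succ k ih => simp only [psiIter, AkFun, ih, pow_succ]; ring

lemma AkFun_eq_sum (α : ℝ) (k : ℕ) (t : ℝ) :
    AkFun α k t = ∑ j ∈ Finset.range k, (1 - α) * α ^ j * t ^ (j + 1) := by
  induction k with
  | zero => simp [AkFun]
  | succ k ih =>
    rw [AkFun, ih, Finset.mul_sum, Finset.sum_range_succ', add_comm]
    congr 1
    · exact Finset.sum_congr rfl fun j _ => by ring
    · ring

lemma summable_mul_pow {f : ℕ → ℝ} (hf0 : ∀ n, 0 ≤ f n) (hf : Summable f)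
    {t : ℝ} (h0 : 0 ≤ t) (h1 : t ≤ 1) : Summable fun n => f n * t ^ n :=
  Summable.of_nonneg_of_le (fun n => mul_nonneg (hf0 n) (pow_nonneg h0 n))
    (fun n => by
      calc f n * t ^ n ≤ f n * 1 := by
            have := pow_le_one₀ h0 h1 (n := n); nlinarith [hf0 n]
        _ = f n := mul_one _) hf

lemma tsum_tail_le {f : ℕ → ℝ} (hf : Summable f) (hf0 : ∀ n, 0 ≤ f n) (n : ℕ) :
    ∑' m, f (m + n) ≤ ∑' m, f m := by
  have h := Summable.sum_add_tsum_nat_add (f := f) n hf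
  have h2 : 0 ≤ ∑ i ∈ Finset.range n, f i := Finset.sum_nonneg fun i _ => hf0 i
  linarith

lemma coeff_unique {f g : ℕ → ℝ} (hf0 : ∀ n, 0 ≤ f n) (hg0 : ∀ n, 0 ≤ g n)
    (hf : Summable f) (hg : Summable g)
    (h : ∀ t : ℝ, 0 < t → t < 1 → ∑' n, f n * t ^ n = ∑' n, g n * t ^ n) :
    f = g := by
  set C : ℝ := (∑' n, f n) + ∑' n, g n with hC
  have C0 : (0:ℝ) ≤ C := add_nonneg (tsum_nonneg hf0) (tsum_nonneg hg0)
  funext n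
  induction n using Nat.strong_induction_on with
  | _ n ih =>
  have key : ∀ t : ℝ, 0 < t → t < 1 → |f n - g n| ≤ t * C := by
    intro t ht0 ht1
    have hsf := summable_mul_pow hf0 hf ht0.le ht1.le
    have hsg := summable_mul_pow hg0 hg ht0.le ht1.le
    have e1 := Summable.sum_add_tsum_nat_add (f := fun n => f n * t ^ n) (n+1) hsf
    have e2 := Summable.sum_add_tsum_nat_add (f := fun n => g n * t ^ n) (n+1) hsg
    have hsum : ∑ i ∈ Finset.range n, f i * t ^ i = ∑ i ∈ Finset.range n, g i * t ^ i :=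
      Finset.sum_congr rfl fun i hi => by rw [ih i (Finset.mem_range.1 hi)]
    have tb : ∀ (u : ℕ → ℝ), (∀ m, 0 ≤ u m) → Summable u →
        ∑' i, u (i + (n+1)) * t ^ (i + (n+1)) ≤ t ^ (n+1) * ∑' m, u m := by
      intro u hu0 hu
      have hsu := summable_mul_pow hu0 hu ht0.le ht1.le
      have hl : Summable fun i => u (i + (n+1)) * t ^ (i + (n+1)) :=
        (summable_nat_add_iff (n+1)).2 hsu
      have hr : Summable fun i => u (i + (n+1)) * t ^ (n+1) :=
        ((summable_nat_add_iff (n+1)).2 hu).mul_right _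
      have h1 : ∑' i, u (i + (n+1)) * t ^ (i + (n+1)) ≤ ∑' i, u (i + (n+1)) * t ^ (n+1) := by
        refine Summable.tsum_le_tsum (fun i => ?_) hl hr
        have h2 : t ^ (i + (n+1)) ≤ t ^ (n+1) :=
          pow_le_pow_of_le_one ht0.le ht1.le (by omega)
        nlinarith [hu0 (i + (n+1))]
      have h3 : ∑' i, u (i + (n+1)) * t ^ (n+1) = t ^ (n+1) * ∑' i, u (i + (n+1)) := by
        rw [tsum_mul_right]; ring
      have h4 : ∑' i, u (i + (n+1)) ≤ ∑' m, u m := tsum_tail_le hu hu0 (n+1)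
      have h5 : (0:ℝ) ≤ t ^ (n+1) := pow_nonneg ht0.le _
      nlinarith
    have tbn : ∀ (u : ℕ → ℝ), (∀ m, 0 ≤ u m) →
        (0:ℝ) ≤ ∑' i, u (i + (n+1)) * t ^ (i + (n+1)) := fun u hu0 =>
      tsum_nonneg fun i => mul_nonneg (hu0 _) (pow_nonneg ht0.le _)
    have e3 : f n * t ^ n + ∑' i, f (i + (n+1)) * t ^ (i + (n+1))
        = g n * t ^ n + ∑' i, g (i + (n+1)) * t ^ (i + (n+1)) := by
      have e4 := (e1.trans (h t ht0 ht1)).trans e2.symm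
      rw [Finset.sum_range_succ, Finset.sum_range_succ, hsum] at e4
      linarith
    have hFb := tb f hf0 hf
    have hGb := tb g hg0 hg
    have hF0 := tbn f hf0
    have hG0 := tbn g hg0
    have habs : |f n - g n| * t ^ n ≤ t ^ (n+1) * C := by
      rw [← abs_of_nonneg (pow_nonneg ht0.le n) (a := t ^ n), ← abs_mul]
      rw [abs_le]
      have hf' : 0 ≤ ∑' n, f n := tsum_nonneg hf0
      have hg' : 0 ≤ ∑' n, g n := tsum_nonneg hg0
      have h5 : (0:ℝ) ≤ t ^ (n+1) := pow_nonneg ht0.le _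
      constructor <;> nlinarith
    have hpow : (0:ℝ) < t ^ n := pow_pos ht0 n
    have : |f n - g n| * t ^ n ≤ (t * C) * t ^ n := by
      calc |f n - g n| * t ^ n ≤ t ^ (n+1) * C := habs
        _ = (t * C) * t ^ n := by ring
    exact le_of_mul_le_mul_right this hpow
  have hz : |f n - g n| ≤ 0 := by
    by_contra hlt
    push_neg at hlt
    set d := |f n - g n| with hd
    have ht0 : (0:ℝ) < min (d / (2 * (C + 1))) 2⁻¹ := lt_min (by positivity) (by norm_num)
    have ht1 : min (d / (2 * (C + 1))) 2⁻¹ < 1 :=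
      lt_of_le_of_lt (min_le_right _ _) (by norm_num)
    have hk := key _ ht0 ht1
    have h2 : min (d / (2 * (C + 1))) 2⁻¹ ≤ d / (2 * (C + 1)) := min_le_left _ _
    have h3 : d / (2 * (C + 1)) * C < d := by
      rw [div_mul_eq_mul_div, div_lt_iff₀ (by linarith)]
      nlinarith
    nlinarith
  have := abs_nonneg (f n - g n)
  have h0 : |f n - g n| = 0 := le_antisymm hz this
  have := abs_eq_zero.1 h0
  linarith


lemma pgf_tsum {Ω : Type*} [MeasureSpace Ω] [IsProbabilityMeasure (ℙ : Measure Ω)]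
    {W : Ω → ℕ} (hW : Measurable W) {t : ℝ} (h0 : 0 ≤ t) (h1 : t ≤ 1) :
    ∫ ω, t ^ W ω ∂ℙ = ∑' n, ((ℙ : Measure Ω) {ω | W ω = n}).toReal * t ^ n := by
  haveI hmap : IsProbabilityMeasure ((ℙ : Measure Ω).map W) :=
    Measure.isProbabilityMeasure_map hW.aemeasurable
  have hmeas : Measurable (fun n : ℕ => t ^ n) := Measurable.of_discrete
  have hint : Integrable (fun n : ℕ => t ^ n) ((ℙ : Measure Ω).map W) := by
    refine Integrable.mono' (integrable_const 1) hmeas.aestronglyMeasurable ?_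
    filter_upwards with n
    rw [Real.norm_eq_abs, abs_of_nonneg (pow_nonneg h0 n)]
    exact pow_le_one₀ h0 h1
  have e1 : ∫ ω, t ^ W ω ∂ℙ = ∫ n, t ^ n ∂((ℙ : Measure Ω).map W) :=
    (integral_map hW.aemeasurable hmeas.aestronglyMeasurable).symm
  rw [e1, integral_countable' hint]
  refine tsum_congr fun n => ?_
  rw [measureReal_def, Measure.map_apply hW (measurableSet_singleton n)]
  rw [smul_eq_mul]
  rfl

lemma tsum_prob_eq_one {Ω : Type*} [MeasureSpace Ω] [IsProbabilityMeasure (ℙ : Measure Ω)]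
    {W : Ω → ℕ} (hW : Measurable W) :
    ∑' n, (ℙ : Measure Ω) {ω | W ω = n} = 1 := by
  have hm : ∀ n : ℕ, MeasurableSet {ω : Ω | W ω = n} := fun n => hW (measurableSet_singleton n)
  have := measure_iUnion (μ := (ℙ : Measure Ω)) (f := fun n => {ω : Ω | W ω = n})
    (fun i j hij => by
      simp only [Set.disjoint_left, Set.mem_setOf_eq]
      intro ω h1 h2
      exact hij (h1.symm.trans h2)) hm
  rw [← this, show (⋃ n, {ω : Ω | W ω = n}) = Set.univ from by ext ω; simp, measure_univ]

lemma measure_gt_eq_tsum {Ω : Type*} [MeasureSpace Ω] {W : Ω → ℕ} (hW : Measurable W) (n : ℕ) :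
    (ℙ : Measure Ω) {ω | n < W ω} = ∑' m, (ℙ : Measure Ω) {ω | W ω = n + 1 + m} := by
  have hset : {ω | n < W ω} = ⋃ m, {ω | W ω = n + 1 + m} := by
    ext ω
    simp only [Set.mem_setOf_eq, Set.mem_iUnion]
    constructor
    · intro h; exact ⟨W ω - (n+1), by omega⟩
    · rintro ⟨m, hm⟩; omega
  rw [hset]
  refine measure_iUnion (fun i j hij => ?_) (fun m => hW (measurableSet_singleton _))
  simp only [Set.disjoint_left, Set.mem_setOf_eq]
  intro ω h1 h2
  exact hij (by omega)

lemma aemeasurable_of_pow_aesm {Ω : Type*} [MeasureSpace Ω] {W : Ω → ℕ} {t : ℝ}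
    (ht0 : 0 < t) (ht1 : t < 1)
    (hsm : AEStronglyMeasurable (fun ω => t ^ W ω) (ℙ : Measure Ω)) :
    AEMeasurable W (ℙ : Measure Ω) := by
  obtain ⟨g, hg, hae⟩ := hsm
  refine ⟨fun ω => ⌊Real.logb t (g ω)⌋₊, ?_, ?_⟩
  · apply Nat.measurable_floor.comp
    simp only [Real.logb]
    exact (Real.measurable_log.comp hg.measurable).div_const _
  · filter_upwards [hae] with ω hω
    rw [← hω, Real.logb_pow,
      Real.logb_self_eq_one_iff.mpr ⟨ht0.ne', ht1.ne, by linarith⟩, mul_one]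
    exact (Nat.floor_natCast _).symm

lemma pow_aesm_of_aem {Ω : Type*} [MeasureSpace Ω] {W : Ω → ℕ}
    (h : AEMeasurable W (ℙ : Measure Ω)) (t : ℝ) :
    AEStronglyMeasurable (fun ω => t ^ W ω) (ℙ : Measure Ω) :=
  ((Measurable.of_discrete (f := fun n : ℕ => t ^ n)).comp_aemeasurable h).aestronglyMeasurable

lemma aemeasurable_of_pgf_ne_zero {Ω : Type*} [MeasureSpace Ω] {W : Ω → ℕ} {t : ℝ}
    (ht0 : 0 < t) (ht1 : t < 1)
    (h : ∫ ω, t ^ W ω ∂(ℙ : Measure Ω) ≠ 0) : AEMeasurable W (ℙ : Measure Ω) := by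
  apply aemeasurable_of_pow_aesm ht0 ht1
  by_contra hc
  exact h (integral_non_aestronglyMeasurable hc)

lemma summable_shift {q : ℕ → ℝ} (hq : Summable q) (d : ℕ) :
    Summable (fun n => if d ≤ n then q (n - d) else 0) := by
  refine ((add_left_injective d).summable_iff (f := fun n => if d ≤ n then q (n - d) else 0)
    ?_).mp (hq.congr fun m => ?_)
  · intro n hn
    rcases le_or_gt d n with h | h
    · exact absurd ⟨n - d, by simp only []; omega⟩ hn
    · simp [Nat.not_le.mpr h]
  · simp

lemma tsum_shift (q : ℕ → ℝ) (d : ℕ) :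
    ∑' n, (if d ≤ n then q (n - d) else 0) = ∑' m, q m := by
  rw [← Function.Injective.tsum_eq (g := fun m : ℕ => m + d) (add_left_injective d)
    (f := fun n => if d ≤ n then q (n - d) else 0) ?_]
  · exact tsum_congr fun m => by simp
  · intro n hn
    rcases le_or_gt d n with h | h
    · exact ⟨n - d, by simp only []; omega⟩
    · simp only [Function.mem_support, ne_eq] at hn
      exact absurd (by simp [Nat.not_le.mpr h]) hn

lemma tsum_shift_mul_pow (q : ℕ → ℝ) (d : ℕ) (t : ℝ) :
    ∑' n, (if d ≤ n then q (n - d) else 0) * t ^ n = t ^ d * ∑' m, q m * t ^ m := by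
  rw [← Function.Injective.tsum_eq (g := fun m : ℕ => m + d) (add_left_injective d)
    (f := fun n => (if d ≤ n then q (n - d) else 0) * t ^ n) ?_]
  · rw [← tsum_mul_left]
    refine tsum_congr fun m => ?_
    simp only [Nat.le_add_left, if_pos, Nat.add_sub_cancel, pow_add]
    ring
  · intro n hn
    rcases le_or_gt d n with h | h
    · exact ⟨n - d, by simp only []; omega⟩
    · simp only [Function.mem_support, ne_eq] at hn
      exact absurd (by simp [Nat.not_le.mpr h]) hn

lemma shift_tail_eq (q : ℕ → ℝ) {d n : ℕ} (h : n + 1 ≤ d) (m : ℕ) :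
    (if d ≤ n + 1 + m then q (n + 1 + m - d) else 0)
      = (if d - (n+1) ≤ m then q (m - (d - (n+1))) else 0) := by
  by_cases hc : d ≤ n + 1 + m
  · rw [if_pos hc, if_pos (by omega)]
    congr 1
    omega
  · rw [if_neg hc, if_neg (by omega)]

lemma summable_tail {f : ℕ → ℝ} (hf : Summable f) (n : ℕ) :
    Summable fun m => f (n + 1 + m) :=
  ((summable_nat_add_iff (n+1)).2 hf).congr fun m => congrArg f (Nat.add_comm _ _)

end PGFAux

/-- general pgf-composition stochastic dominance:
if `E[t^X] = ψ^{k}(t·P_Z(t), t)` and `E[t^Y] = ψ^{k}(t, t) · P_Z(t)`, then `X ⪯_st Y`. -/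
theorem pgf_composition_dominance
    {Ω Ω' Ω'' : Type*}
    [MeasureSpace Ω] [IsProbabilityMeasure (ℙ : Measure Ω)]
    [MeasureSpace Ω'] [IsProbabilityMeasure (ℙ : Measure Ω')]
    [MeasureSpace Ω''] [IsProbabilityMeasure (ℙ : Measure Ω'')]
    (α : ℝ) (hα : α ∈ Set.Ioo (0 : ℝ) 1)
    (k : ℕ) (hk : 1 ≤ k)
    (Z : Ω'' → ℕ) (PZ : ℝ → ℝ)
    (hZ : ∀ t ∈ Set.Icc (0 : ℝ) 1, ∫ ω, t ^ Z ω ∂ℙ = PZ t)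
    (X : Ω → ℕ) (Y : Ω' → ℕ)
    (hX : ∀ t ∈ Set.Icc (0 : ℝ) 1, ∫ ω, t ^ X ω ∂ℙ = psiIter α k (t * PZ t) t)
    (hY : ∀ t ∈ Set.Icc (0 : ℝ) 1, ∫ ω, t ^ Y ω ∂ℙ = psiIter α k t t * PZ t) :
    StochLE X Y := by
  obtain ⟨hα0, hα1⟩ := hα
  have hw0 : ∀ j : ℕ, 0 ≤ (1 - α) * α ^ j :=
    fun j => mul_nonneg (by linarith) (pow_nonneg hα0.le j)
  have hPZn : ∀ t ∈ Set.Icc (0:ℝ) 1, 0 ≤ PZ t := by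
    intro t ht
    rw [← hZ t ht]
    exact integral_nonneg fun ω => pow_nonneg ht.1 _
  have hhalf : (2⁻¹ : ℝ) ∈ Set.Icc (0:ℝ) 1 := by norm_num
  have hApos : ∀ t : ℝ, 0 < t → 0 < PGFAux.AkFun α k t := by
    intro t ht
    rw [PGFAux.AkFun_eq_sum]
    refine Finset.sum_pos (fun j _ => ?_) (Finset.nonempty_range_iff.mpr (by omega))
    exact mul_pos (mul_pos (by linarith) (pow_pos hα0 j)) (pow_pos ht _)
  -- X is a.e. measurable
  have hXae : AEMeasurable X (ℙ : Measure Ω) := by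
    refine PGFAux.aemeasurable_of_pgf_ne_zero (t := 2⁻¹) (by norm_num) (by norm_num) ?_
    rw [hX 2⁻¹ hhalf, PGFAux.psiIter_eq_affine]
    have h1 : 0 ≤ (α * 2⁻¹) ^ k * (2⁻¹ * PZ 2⁻¹) :=
      mul_nonneg (pow_nonneg (by positivity) k) (mul_nonneg (by norm_num) (hPZn _ hhalf))
    have h2 := hApos 2⁻¹ (by norm_num)
    exact ne_of_gt (by linarith)
  obtain ⟨X', hX'm, hXX'⟩ := hXae
  have hpg : ∀ t ∈ Set.Icc (0:ℝ) 1,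
      ∫ ω, t ^ X ω ∂ℙ = ∑' n, ((ℙ : Measure Ω) {ω | X' ω = n}).toReal * t ^ n := by
    intro t ht
    rw [integral_congr_ae (hXX'.mono fun ω h => by rw [h])]
    exact PGFAux.pgf_tsum hX'm ht.1 ht.2
  set p : ℕ → ℝ := fun n => ((ℙ : Measure Ω) {ω | X' ω = n}).toReal with hpdef
  have hp0 : ∀ n, 0 ≤ p n := fun n => ENNReal.toReal_nonneg
  have hptop : ∑' n, (ℙ : Measure Ω) {ω | X' ω = n} = 1 := PGFAux.tsum_prob_eq_one hX'm
  have hpsum : Summable p :=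
    ENNReal.summable_toReal (by rw [hptop]; exact ENNReal.one_ne_top)
  have hptot : ∑' n, p n = 1 := by
    simp only [hpdef]
    rw [← ENNReal.tsum_toReal_eq (fun n => measure_ne_top _ _), hptop, ENNReal.toReal_one]
  -- the coefficient sequence of AkFun
  set a : ℕ → ℝ := fun n =>
    ∑ j ∈ Finset.range k, ((1 - α) * α ^ j) * (if n = j + 1 then 1 else 0) with hadef
  have ha0 : ∀ n, 0 ≤ a n := by
    intro n
    refine Finset.sum_nonneg fun j _ => ?_
    by_cases h : n = j + 1 <;> simp [h, hw0 j]
  have hasum : Summable a := by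
    refine summable_of_ne_finset_zero (s := Finset.range (k+2)) fun n hn => ?_
    refine Finset.sum_eq_zero fun j hj => ?_
    rw [if_neg, mul_zero]
    simp only [Finset.mem_range] at hn hj
    omega
  have haval : ∀ t : ℝ, ∑' n, a n * t ^ n = PGFAux.AkFun α k t := by
    intro t
    rw [PGFAux.AkFun_eq_sum]
    have hsw : ∀ j ∈ Finset.range k,
        Summable (fun n => ((1 - α) * α ^ j) * (if n = j + 1 then 1 else 0) * t ^ n) := by
      intro j _
      refine summable_of_ne_finset_zero (s := {j+1}) fun n hn => ?_
      rw [if_neg (by simpa using hn), mul_zero, zero_mul]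
    calc ∑' n, a n * t ^ n
        = ∑' n, ∑ j ∈ Finset.range k, ((1 - α) * α ^ j) * (if n = j + 1 then 1 else 0) * t ^ n := by
          exact tsum_congr fun n => by rw [hadef, Finset.sum_mul]
      _ = ∑ j ∈ Finset.range k, ∑' n, ((1 - α) * α ^ j) * (if n = j + 1 then 1 else 0) * t ^ n :=
          Summable.tsum_finsetSum hsw
      _ = ∑ j ∈ Finset.range k, (1 - α) * α ^ j * t ^ (j + 1) := by
          refine Finset.sum_congr rfl fun j _ => ?_
          have he : ∑' n, ((1 - α) * α ^ j) * (if n = j + 1 then 1 else 0) * t ^ n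
              = ∑' n, (if n = j + 1 then (1 - α) * α ^ j * t ^ (j+1) else 0) :=
            tsum_congr fun n => by by_cases h : n = j + 1 <;> simp [h]
          rw [he, tsum_ite_eq]
  have hatot : ∑' n, a n = 1 - α ^ k := by
    have hsw : ∀ j ∈ Finset.range k,
        Summable (fun n => ((1 - α) * α ^ j) * (if n = j + 1 then 1 else 0)) := by
      intro j _
      refine summable_of_ne_finset_zero (s := {j+1}) fun n hn => ?_
      rw [if_neg (by simpa using hn), mul_zero]
    have h1 : ∑' n, a n = ∑ j ∈ Finset.range k, (1 - α) * α ^ j := by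
      calc ∑' n, a n
          = ∑ j ∈ Finset.range k, ∑' n, ((1 - α) * α ^ j) * (if n = j + 1 then 1 else 0) :=
            Summable.tsum_finsetSum hsw
        _ = ∑ j ∈ Finset.range k, (1 - α) * α ^ j := by
            refine Finset.sum_congr rfl fun j _ => ?_
            have he : ∑' n, ((1 - α) * α ^ j) * (if n = j + 1 then 1 else 0)
                = ∑' n, (if n = j + 1 then (1 - α) * α ^ j else 0) :=
              tsum_congr fun n => by by_cases h : n = j + 1 <;> simp [h]
            rw [he, tsum_ite_eq]
    rw [h1, ← Finset.mul_sum, geom_sum_eq hα1.ne]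
    have : α - 1 ≠ 0 := by intro h; apply hα1.ne; linarith
    field_simp
    ring
  -- Z is a.e. measurable
  have hZae : AEMeasurable Z (ℙ : Measure Ω'') := by
    by_contra hZc
    have hPZ0 : ∀ t : ℝ, 0 < t → t < 1 → PZ t = 0 := by
      intro t ht0 ht1
      rw [← hZ t ⟨ht0.le, ht1.le⟩]
      apply integral_non_aestronglyMeasurable
      intro hc
      exact hZc (PGFAux.aemeasurable_of_pow_aesm ht0 ht1 hc)
    have hkey : ∀ t : ℝ, 0 < t → t < 1 → ∑' n, p n * t ^ n = ∑' n, a n * t ^ n := by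
      intro t ht0 ht1
      rw [← hpg t ⟨ht0.le, ht1.le⟩, hX t ⟨ht0.le, ht1.le⟩, PGFAux.psiIter_eq_affine,
        hPZ0 t ht0 ht1, haval]
      ring
    have hpa := PGFAux.coeff_unique hp0 ha0 hpsum hasum hkey
    rw [hpa, hatot] at hptot
    have : (0:ℝ) < α ^ k := pow_pos hα0 k
    linarith
  obtain ⟨Z', hZ'm, hZZ'⟩ := hZae
  set q : ℕ → ℝ := fun n => ((ℙ : Measure Ω'') {ω | Z' ω = n}).toReal with hqdef
  have hq0 : ∀ n, 0 ≤ q n := fun n => ENNReal.toReal_nonneg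
  have hqtop : ∑' n, (ℙ : Measure Ω'') {ω | Z' ω = n} = 1 := PGFAux.tsum_prob_eq_one hZ'm
  have hqsum : Summable q :=
    ENNReal.summable_toReal (by rw [hqtop]; exact ENNReal.one_ne_top)
  have hqtot : ∑' n, q n = 1 := by
    simp only [hqdef]
    rw [← ENNReal.tsum_toReal_eq (fun n => measure_ne_top _ _), hqtop, ENNReal.toReal_one]
  have hqg : ∀ t ∈ Set.Icc (0:ℝ) 1, PZ t = ∑' m, q m * t ^ m := by
    intro t ht
    rw [← hZ t ht, integral_congr_ae (hZZ'.mono fun ω h => by rw [h])]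
    exact PGFAux.pgf_tsum hZ'm ht.1 ht.2
  -- Y is a.e. measurable
  have hPZhalf : 0 < PZ 2⁻¹ := by
    have hex : ∃ i, 0 < q i := by
      by_contra hno
      push_neg at hno
      have hzero : ∀ i, q i = 0 := fun i => le_antisymm (hno i) (hq0 i)
      rw [tsum_congr hzero, tsum_zero] at hqtot
      norm_num at hqtot
    obtain ⟨i, hi⟩ := hex
    rw [hqg 2⁻¹ hhalf]
    refine Summable.tsum_pos (PGFAux.summable_mul_pow hq0 hqsum (by norm_num) (by norm_num))
      (fun n => mul_nonneg (hq0 n) (by positivity)) i (mul_pos hi (by positivity))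
  have hYae : AEMeasurable Y (ℙ : Measure Ω') := by
    refine PGFAux.aemeasurable_of_pgf_ne_zero (t := 2⁻¹) (by norm_num) (by norm_num) ?_
    rw [hY 2⁻¹ hhalf, PGFAux.psiIter_eq_affine]
    have h1 : 0 ≤ (α * 2⁻¹) ^ k * 2⁻¹ := mul_nonneg (pow_nonneg (by positivity) k) (by norm_num)
    have h2 := hApos 2⁻¹ (by norm_num)
    have h3 : 0 < (PGFAux.AkFun α k 2⁻¹ + (α * 2⁻¹) ^ k * 2⁻¹) * PZ 2⁻¹ :=
      mul_pos (by linarith) hPZhalf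
    exact ne_of_gt h3
  obtain ⟨Y', hY'm, hYY'⟩ := hYae
  have hrg : ∀ t ∈ Set.Icc (0:ℝ) 1,
      ∫ ω, t ^ Y ω ∂ℙ = ∑' n, ((ℙ : Measure Ω') {ω | Y' ω = n}).toReal * t ^ n := by
    intro t ht
    rw [integral_congr_ae (hYY'.mono fun ω h => by rw [h])]
    exact PGFAux.pgf_tsum hY'm ht.1 ht.2
  set r : ℕ → ℝ := fun n => ((ℙ : Measure Ω') {ω | Y' ω = n}).toReal with hrdef
  have hr0 : ∀ n, 0 ≤ r n := fun n => ENNReal.toReal_nonneg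
  have hrtop : ∑' n, (ℙ : Measure Ω') {ω | Y' ω = n} = 1 := PGFAux.tsum_prob_eq_one hY'm
  have hrsum : Summable r :=
    ENNReal.summable_toReal (by rw [hrtop]; exact ENNReal.one_ne_top)
  -- the shifted coefficient sequences
  set sh : ℕ → ℕ → ℝ := fun e n => if e ≤ n then q (n - e) else 0 with hshdef
  have hsh0 : ∀ e n, 0 ≤ sh e n := by
    intro e n
    by_cases h : e ≤ n <;> simp [hshdef, h, hq0 _]
  have hshs : ∀ e, Summable (sh e) := fun e => PGFAux.summable_shift hqsum e
  set c : ℕ → ℝ := fun n => a n + α ^ k * sh (k+1) n with hcdef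
  set d : ℕ → ℝ := fun n =>
    (∑ j ∈ Finset.range k, ((1 - α) * α ^ j) * sh (j+1) n) + α ^ k * sh (k+1) n with hddef
  have hc0 : ∀ n, 0 ≤ c n := fun n =>
    add_nonneg (ha0 n) (mul_nonneg (pow_nonneg hα0.le k) (hsh0 _ n))
  have hd0 : ∀ n, 0 ≤ d n := fun n =>
    add_nonneg (Finset.sum_nonneg fun j _ => mul_nonneg (hw0 j) (hsh0 _ n))
      (mul_nonneg (pow_nonneg hα0.le k) (hsh0 _ n))
  have hcsum : Summable c := hasum.add ((hshs (k+1)).mul_left _)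
  have hdsum : Summable d :=
    (summable_sum fun j _ => (hshs (j+1)).mul_left _).add ((hshs (k+1)).mul_left _)
  -- identify the coefficients of X with c
  have hXeq : ∀ t : ℝ, 0 < t → t < 1 → ∑' n, p n * t ^ n = ∑' n, c n * t ^ n := by
    intro t ht0 ht1
    have ht : t ∈ Set.Icc (0:ℝ) 1 := ⟨ht0.le, ht1.le⟩
    have h1 : ∑' n, (α ^ k * sh (k+1) n) * t ^ n = (α * t) ^ k * (t * PZ t) := by
      calc ∑' n, (α ^ k * sh (k+1) n) * t ^ n
          = α ^ k * ∑' n, sh (k+1) n * t ^ n := by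
            rw [← tsum_mul_left]
            exact tsum_congr fun n => by ring
        _ = α ^ k * (t ^ (k+1) * ∑' m, q m * t ^ m) := by
            rw [hshdef, PGFAux.tsum_shift_mul_pow]
        _ = (α * t) ^ k * (t * PZ t) := by
            rw [hqg t ht, mul_pow]
            ring
    have h2 : ∑' n, c n * t ^ n
        = ∑' n, a n * t ^ n + ∑' n, (α ^ k * sh (k+1) n) * t ^ n := by
      rw [← Summable.tsum_add (PGFAux.summable_mul_pow ha0 hasum ht0.le ht1.le)
        (PGFAux.summable_mul_pow (fun n => mul_nonneg (pow_nonneg hα0.le k) (hsh0 _ n))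
          ((hshs (k+1)).mul_left _) ht0.le ht1.le)]
      exact tsum_congr fun n => by rw [hcdef]; ring
    rw [← hpg t ht, hX t ht, PGFAux.psiIter_eq_affine, h2, haval, h1]
  have hpc : p = c := PGFAux.coeff_unique hp0 hc0 hpsum hcsum hXeq
  -- identify the coefficients of Y with d
  have hYeq : ∀ t : ℝ, 0 < t → t < 1 → ∑' n, r n * t ^ n = ∑' n, d n * t ^ n := by
    intro t ht0 ht1
    have ht : t ∈ Set.Icc (0:ℝ) 1 := ⟨ht0.le, ht1.le⟩
    have hterm : ∀ e : ℕ, ∑' n, sh e n * t ^ n = t ^ e * PZ t := by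
      intro e
      rw [hshdef, PGFAux.tsum_shift_mul_pow, ← hqg t ht]
    have hs1 : ∀ j, Summable fun n => (((1 - α) * α ^ j) * sh (j+1) n) * t ^ n :=
      fun j => PGFAux.summable_mul_pow (fun n => mul_nonneg (hw0 j) (hsh0 _ n))
        ((hshs (j+1)).mul_left _) ht0.le ht1.le
    have hs2 : Summable fun n => (α ^ k * sh (k+1) n) * t ^ n :=
      PGFAux.summable_mul_pow (fun n => mul_nonneg (pow_nonneg hα0.le k) (hsh0 _ n))
        ((hshs (k+1)).mul_left _) ht0.le ht1.le
    have hs3 : Summable fun n => (∑ j ∈ Finset.range k, ((1 - α) * α ^ j) * sh (j+1) n) * t ^ n := by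
      refine (summable_sum (s := Finset.range k)
        (f := fun j n => (((1 - α) * α ^ j) * sh (j+1) n) * t ^ n) (fun j _ => hs1 j)).congr
        fun n => ?_
      rw [Finset.sum_mul]
    have h2 : ∑' n, d n * t ^ n
        = (∑ j ∈ Finset.range k, ((1 - α) * α ^ j) * (t ^ (j+1) * PZ t))
          + α ^ k * (t ^ (k+1) * PZ t) := by
      calc ∑' n, d n * t ^ n
          = ∑' n, ((∑ j ∈ Finset.range k, ((1 - α) * α ^ j) * sh (j+1) n) * t ^ n
              + (α ^ k * sh (k+1) n) * t ^ n) := by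
            exact tsum_congr fun n => by rw [hddef]; ring
        _ = ∑' n, (∑ j ∈ Finset.range k, ((1 - α) * α ^ j) * sh (j+1) n) * t ^ n
              + ∑' n, (α ^ k * sh (k+1) n) * t ^ n := Summable.tsum_add hs3 hs2
        _ = (∑ j ∈ Finset.range k, ((1 - α) * α ^ j) * (t ^ (j+1) * PZ t))
              + α ^ k * (t ^ (k+1) * PZ t) := by
            congr 1
            · calc ∑' n, (∑ j ∈ Finset.range k, ((1 - α) * α ^ j) * sh (j+1) n) * t ^ n
                  = ∑' n, ∑ j ∈ Finset.range k, (((1 - α) * α ^ j) * sh (j+1) n) * t ^ n :=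
                    tsum_congr fun n => by rw [Finset.sum_mul]
                _ = ∑ j ∈ Finset.range k, ∑' n, (((1 - α) * α ^ j) * sh (j+1) n) * t ^ n :=
                    Summable.tsum_finsetSum fun j _ => hs1 j
                _ = ∑ j ∈ Finset.range k, ((1 - α) * α ^ j) * (t ^ (j+1) * PZ t) := by
                    refine Finset.sum_congr rfl fun j _ => ?_
                    rw [← hterm (j+1), ← tsum_mul_left]
                    exact tsum_congr fun n => by ring
            · rw [← hterm (k+1), ← tsum_mul_left]
              exact tsum_congr fun n => by ring
    rw [← hrg t ht, hY t ht, PGFAux.psiIter_eq_affine, h2, PGFAux.AkFun_eq_sum,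
      add_mul, Finset.sum_mul, mul_pow]
    congr 1
    · exact Finset.sum_congr rfl fun j _ => by ring
    · ring
  have hrd : r = d := PGFAux.coeff_unique hr0 hd0 hrsum hdsum hYeq
  -- conclude the stochastic ordering
  intro n
  have hXev : (ℙ : Measure Ω) {ω | n < X ω} = (ℙ : Measure Ω) {ω | n < X' ω} :=
    measure_congr (by filter_upwards [hXX'] with ω h; exact congrArg (fun m => n < m) h)
  have hYev : (ℙ : Measure Ω') {ω | n < Y ω} = (ℙ : Measure Ω') {ω | n < Y' ω} :=
    measure_congr (by filter_upwards [hYY'] with ω h; exact congrArg (fun m => n < m) h)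
  rw [hXev, hYev, PGFAux.measure_gt_eq_tsum hX'm n, PGFAux.measure_gt_eq_tsum hY'm n]
  have h1 : ∑' m, (ℙ : Measure Ω) {ω | X' ω = n + 1 + m}
      = ENNReal.ofReal (∑' m, p (n+1+m)) := by
    rw [ENNReal.ofReal_tsum_of_nonneg (fun m => hp0 _) (PGFAux.summable_tail hpsum n)]
    exact tsum_congr fun m => (ENNReal.ofReal_toReal (measure_ne_top _ _)).symm
  have h2 : ∑' m, (ℙ : Measure Ω') {ω | Y' ω = n + 1 + m}
      = ENNReal.ofReal (∑' m, r (n+1+m)) := by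
    rw [ENNReal.ofReal_tsum_of_nonneg (fun m => hr0 _) (PGFAux.summable_tail hrsum n)]
    exact tsum_congr fun m => (ENNReal.ofReal_toReal (measure_ne_top _ _)).symm
  rw [h1, h2]
  apply ENNReal.ofReal_le_ofReal
  rw [hpc, hrd]
  -- compare the tails of c and d
  have hTone : ∀ e : ℕ, n + 1 ≤ e → ∑' m, sh e (n+1+m) = 1 := by
    intro e he
    have h3 : ∀ m, sh e (n+1+m) = (if e - (n+1) ≤ m then q (m - (e - (n+1))) else 0) :=
      fun m => PGFAux.shift_tail_eq q he m
    rw [tsum_congr h3, PGFAux.tsum_shift, hqtot]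
  have hTnn : ∀ e : ℕ, 0 ≤ ∑' m, sh e (n+1+m) :=
    fun e => tsum_nonneg fun m => hsh0 e _
  have hTa : ∑' m, a (n+1+m)
      = ∑ j ∈ Finset.range k, ((1 - α) * α ^ j) * (if n ≤ j then 1 else 0) := by
    have hsw : ∀ j ∈ Finset.range k,
        Summable fun m => ((1 - α) * α ^ j) * (if n + 1 + m = j + 1 then 1 else 0) := by
      intro j _
      refine summable_of_ne_finset_zero (s := Finset.range (j+1)) fun m hm => ?_
      simp only [Finset.mem_range] at hm
      rw [if_neg (by omega), mul_zero]
    calc ∑' m, a (n+1+m)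
        = ∑' m, ∑ j ∈ Finset.range k, ((1 - α) * α ^ j) * (if n + 1 + m = j + 1 then 1 else 0) :=
          tsum_congr fun m => by rw [hadef]
      _ = ∑ j ∈ Finset.range k, ∑' m, ((1 - α) * α ^ j) * (if n + 1 + m = j + 1 then 1 else 0) :=
          Summable.tsum_finsetSum hsw
      _ = ∑ j ∈ Finset.range k, ((1 - α) * α ^ j) * (if n ≤ j then 1 else 0) := by
          refine Finset.sum_congr rfl fun j _ => ?_
          by_cases hnj : n ≤ j
          · have he : ∀ m : ℕ, ((1 - α) * α ^ j) * (if n + 1 + m = j + 1 then 1 else 0)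
                = (if m = j - n then (1 - α) * α ^ j else 0) := by
              intro m
              by_cases h : m = j - n
              · rw [if_pos h, if_pos (by omega), mul_one]
              · rw [if_neg (by omega), if_neg h, mul_zero]
            rw [tsum_congr he, tsum_ite_eq, if_pos hnj, mul_one]
          · have he : ∀ m : ℕ, ((1 - α) * α ^ j) * (if n + 1 + m = j + 1 then 1 else 0)
                = 0 := by
              intro m
              rw [if_neg (by omega), mul_zero]
            rw [tsum_congr he, tsum_zero, if_neg hnj, mul_zero]
  have hTc : ∑' m, c (n+1+m)
      = (∑' m, a (n+1+m)) + α ^ k * ∑' m, sh (k+1) (n+1+m) := by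
    rw [← tsum_mul_left,
      ← Summable.tsum_add (PGFAux.summable_tail hasum n)
        (PGFAux.summable_tail ((hshs (k+1)).mul_left (α ^ k)) n)]
  have hTd : ∑' m, d (n+1+m)
      = (∑ j ∈ Finset.range k, ((1 - α) * α ^ j) * ∑' m, sh (j+1) (n+1+m))
        + α ^ k * ∑' m, sh (k+1) (n+1+m) := by
    have hss : Summable fun m => ∑ j ∈ Finset.range k, ((1 - α) * α ^ j) * sh (j+1) (n+1+m) :=
      summable_sum fun j _ => PGFAux.summable_tail ((hshs (j+1)).mul_left _) n
    calc ∑' m, d (n+1+m)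
        = ∑' m, ((∑ j ∈ Finset.range k, ((1 - α) * α ^ j) * sh (j+1) (n+1+m))
            + α ^ k * sh (k+1) (n+1+m)) := tsum_congr fun m => by rw [hddef]
      _ = (∑' m, ∑ j ∈ Finset.range k, ((1 - α) * α ^ j) * sh (j+1) (n+1+m))
            + ∑' m, α ^ k * sh (k+1) (n+1+m) :=
          Summable.tsum_add hss (PGFAux.summable_tail ((hshs (k+1)).mul_left _) n)
      _ = (∑ j ∈ Finset.range k, ((1 - α) * α ^ j) * ∑' m, sh (j+1) (n+1+m))
            + α ^ k * ∑' m, sh (k+1) (n+1+m) := by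
          rw [Summable.tsum_finsetSum fun j _ => PGFAux.summable_tail ((hshs (j+1)).mul_left _) n,
            tsum_mul_left]
          congr 1
          exact Finset.sum_congr rfl fun j _ => tsum_mul_left
  rw [hTc, hTd]
  have hmain : ∑' m, a (n+1+m)
      ≤ ∑ j ∈ Finset.range k, ((1 - α) * α ^ j) * ∑' m, sh (j+1) (n+1+m) := by
    rw [hTa]
    refine Finset.sum_le_sum fun j _ => ?_
    by_cases hnj : n ≤ j
    · rw [if_pos hnj, hTone (j+1) (by omega)]
    · rw [if_neg hnj, mul_zero]
      exact mul_nonneg (hw0 j) (hTnn _)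
  linarith


end
end
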